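/- arXiv:1201.6551 — 6 statements merged into one kernel-verified Lean document; each statement's English description precedes it below -/
import Mathlib

section
/- Let $p$ and $q$ be probability densities on a $\sigma$-finite measured space $(T,\mathcal{T},m)$, and let $(P_t)_{t\in T}$, $(Q_t)_{t\in T}$ be families of probability densities on a $\sigma$-finite measured space $(E,\mathcal{A},\nu)$, measurable in $t$. Define the mixtures $P=\int_T P_t\, p(t)\,dm(t)$ and $Q=\int_T Q_t\, q(t)\,dm(t)$. Then $h^2(P,Q) \le 2 h^2(p,q) + 2\int_T h^2(P_t,Q_t)\, q(t)\, dm(t)$. -/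
open MeasureTheory Real Filter

/-- Squared Hellinger distance between two densities on a measured space. -/
noncomputable def hell2 {E : Type*} [MeasurableSpace E] (ν : Measure E) (f g : E → ℝ) : ℝ :=
  (1 / 2) * ∫ x, (Real.sqrt (f x) - Real.sqrt (g x)) ^ 2 ∂ν

section Aux

variable {α : Type*} [MeasurableSpace α] {μ : Measure α}

lemma integrable_of_integral_eq_one' {f : α → ℝ} (h : ∫ x, f x ∂μ = 1) :
    Integrable f μ := by
  by_contra h'
  rw [integral_undef h'] at h
  norm_num at h


/-- Cauchy–Schwarz for square roots. -/
lemma integral_sqrt_mul_sqrt_le {u v : α → ℝ} (hu : Integrable u μ) (hv : Integrable v μ)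
    (hu0 : ∀ᵐ x ∂μ, 0 ≤ u x) (hv0 : ∀ᵐ x ∂μ, 0 ≤ v x) :
    ∫ x, Real.sqrt (u x) * Real.sqrt (v x) ∂μ ≤
      Real.sqrt (∫ x, u x ∂μ) * Real.sqrt (∫ x, v x ∂μ) := by
  have hconj : Real.HolderConjugate 2 2 := by constructor <;> norm_num
  have hsu : AEStronglyMeasurable (fun x => Real.sqrt (u x)) μ :=
    Real.continuous_sqrt.comp_aestronglyMeasurable hu.1
  have hsv : AEStronglyMeasurable (fun x => Real.sqrt (v x)) μ :=
    Real.continuous_sqrt.comp_aestronglyMeasurable hv.1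
  have hmu : MemLp (fun x => Real.sqrt (u x)) (ENNReal.ofReal 2) μ := by
    rw [show ENNReal.ofReal 2 = 2 by norm_num]
    rw [memLp_two_iff_integrable_sq hsu]
    exact hu.congr (by filter_upwards [hu0] with x hx using (Real.sq_sqrt hx).symm)
  have hmv : MemLp (fun x => Real.sqrt (v x)) (ENNReal.ofReal 2) μ := by
    rw [show ENNReal.ofReal 2 = 2 by norm_num]
    rw [memLp_two_iff_integrable_sq hsv]
    exact hv.congr (by filter_upwards [hv0] with x hx using (Real.sq_sqrt hx).symm)
  have h := integral_mul_le_Lp_mul_Lq_of_nonneg hconj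
    (Filter.Eventually.of_forall fun x => Real.sqrt_nonneg (u x))
    (Filter.Eventually.of_forall fun x => Real.sqrt_nonneg (v x)) hmu hmv
  have h2u : ∫ x, Real.sqrt (u x) ^ (2 : ℝ) ∂μ = ∫ x, u x ∂μ := by
    refine integral_congr_ae ?_
    filter_upwards [hu0] with x hx
    rw [show ((2:ℝ)) = ((2:ℕ):ℝ) by norm_num, Real.rpow_natCast]
    exact Real.sq_sqrt hx
  have h2v : ∫ x, Real.sqrt (v x) ^ (2 : ℝ) ∂μ = ∫ x, v x ∂μ := by
    refine integral_congr_ae ?_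
    filter_upwards [hv0] with x hx
    rw [show ((2:ℝ)) = ((2:ℕ):ℝ) by norm_num, Real.rpow_natCast]
    exact Real.sq_sqrt hx
  rw [h2u, h2v] at h
  calc ∫ x, Real.sqrt (u x) * Real.sqrt (v x) ∂μ
      ≤ (∫ x, u x ∂μ) ^ ((1:ℝ)/2) * (∫ x, v x ∂μ) ^ ((1:ℝ)/2) := h
    _ = Real.sqrt (∫ x, u x ∂μ) * Real.sqrt (∫ x, v x ∂μ) := by
        rw [Real.sqrt_eq_rpow, Real.sqrt_eq_rpow]

lemma sqrt_mul_sqrt_integrable {u v : α → ℝ} (hu : Integrable u μ) (hv : Integrable v μ)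
    (hu0 : ∀ᵐ x ∂μ, 0 ≤ u x) (hv0 : ∀ᵐ x ∂μ, 0 ≤ v x) :
    Integrable (fun x => Real.sqrt (u x) * Real.sqrt (v x)) μ := by
  have huv : Integrable (fun x => (u x + v x) / 2) μ := (hu.add hv).div_const 2
  refine Integrable.mono' huv
    ((Real.continuous_sqrt.comp_aestronglyMeasurable hu.1).mul
      (Real.continuous_sqrt.comp_aestronglyMeasurable hv.1)) ?_
  filter_upwards [hu0, hv0] with x hxu hxv
  rw [Real.norm_of_nonneg (by positivity)]
  nlinarith [Real.sq_sqrt hxu, Real.sq_sqrt hxv, sq_nonneg (Real.sqrt (u x) - Real.sqrt (v x))]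

/-- Reverse triangle inequality for Hellinger-type quantities. -/
lemma sq_sqrt_sub_integral_le {u v : α → ℝ} (hu : Integrable u μ) (hv : Integrable v μ)
    (hu0 : ∀ᵐ x ∂μ, 0 ≤ u x) (hv0 : ∀ᵐ x ∂μ, 0 ≤ v x) :
    (Real.sqrt (∫ x, u x ∂μ) - Real.sqrt (∫ x, v x ∂μ)) ^ 2 ≤
      ∫ x, (Real.sqrt (u x) - Real.sqrt (v x)) ^ 2 ∂μ := by
  have hsu := sqrt_mul_sqrt_integrable hu hv hu0 hv0
  have h1 : ∫ x, (Real.sqrt (u x) - Real.sqrt (v x)) ^ 2 ∂μ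
      = (∫ x, u x ∂μ) + (∫ x, v x ∂μ) - 2 * ∫ x, Real.sqrt (u x) * Real.sqrt (v x) ∂μ := by
    have hcongr : (fun x => (Real.sqrt (u x) - Real.sqrt (v x)) ^ 2)
        =ᵐ[μ] fun x => u x + v x - 2 * (Real.sqrt (u x) * Real.sqrt (v x)) := by
      filter_upwards [hu0, hv0] with x hxu hxv
      have := Real.sq_sqrt hxu
      have := Real.sq_sqrt hxv
      rw [sub_sq, Real.sq_sqrt hxu, Real.sq_sqrt hxv]
      ring
    have huv : Integrable (fun x => u x + v x) μ := hu.add hv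
    rw [integral_congr_ae hcongr, integral_sub huv (hsu.const_mul 2),
      integral_add hu hv, integral_const_mul 2 _]
  have hCS := integral_sqrt_mul_sqrt_le hu hv hu0 hv0
  have hL : (Real.sqrt (∫ x, u x ∂μ) - Real.sqrt (∫ x, v x ∂μ)) ^ 2
      = (∫ x, u x ∂μ) + (∫ x, v x ∂μ)
        - 2 * (Real.sqrt (∫ x, u x ∂μ) * Real.sqrt (∫ x, v x ∂μ)) := by
    have h1 := Real.sq_sqrt (integral_nonneg_of_ae hu0)
    have h2 := Real.sq_sqrt (integral_nonneg_of_ae hv0)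
    nlinarith
  linarith [h1, hL, hCS]


end Aux

section ProdInt


variable {T E : Type*} [MeasurableSpace T] [MeasurableSpace E]
  {m : Measure T} {ν : Measure E} [SigmaFinite m] [SigmaFinite ν]

lemma mix_prod_integrable {W : T → E → ℝ} {c : T → ℝ} {C : ℝ}
    (hWm : Measurable (Function.uncurry W)) (hW0 : ∀ t x, 0 ≤ W t x)
    (hWint : ∀ t, Integrable (W t) ν) (hWle : ∀ t, ∫ x, W t x ∂ν ≤ C)
    (hc0 : ∀ t, 0 ≤ c t) (hcm : Measurable c) (hcint : Integrable c m) :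
    Integrable (Function.uncurry fun t x => W t x * c t) (m.prod ν) := by
  have hm : Measurable (Function.uncurry fun t x => W t x * c t) :=
    hWm.mul (hcm.comp measurable_fst)
  refine ⟨hm.aestronglyMeasurable, ?_⟩
  rw [hasFiniteIntegral_iff_norm]
  have hkey : ∫⁻ z, ENNReal.ofReal ‖Function.uncurry (fun t x => W t x * c t) z‖ ∂(m.prod ν)
      = ∫⁻ z, ENNReal.ofReal (c z.1) * ENNReal.ofReal (W z.1 z.2) ∂(m.prod ν) := by
    refine lintegral_congr fun z => ?_
    rw [Function.uncurry]
    rw [Real.norm_of_nonneg (mul_nonneg (hW0 z.1 z.2) (hc0 z.1)), mul_comm,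
      ENNReal.ofReal_mul (hc0 z.1)]
  have hmeas : Measurable fun z : T × E => ENNReal.ofReal (c z.1) * ENNReal.ofReal (W z.1 z.2) :=
    (hcm.comp measurable_fst).ennreal_ofReal.mul hWm.ennreal_ofReal
  rw [hkey, lintegral_prod (fun z : T × E => ENNReal.ofReal (c z.1) * ENNReal.ofReal (W z.1 z.2))
    hmeas.aemeasurable]
  have hin : ∀ t, ∫⁻ x, ENNReal.ofReal (c t) * ENNReal.ofReal (W t x) ∂ν
      = ENNReal.ofReal (c t) * ENNReal.ofReal (∫ x, W t x ∂ν) := fun t => by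
    rw [lintegral_const_mul _ (hWm.of_uncurry_left).ennreal_ofReal,
      ofReal_integral_eq_lintegral_ofReal (hWint t)
        (Eventually.of_forall fun x => hW0 t x)]
  calc ∫⁻ t, ∫⁻ x, ENNReal.ofReal (c t) * ENNReal.ofReal (W t x) ∂ν ∂m
      = ∫⁻ t, ENNReal.ofReal (c t) * ENNReal.ofReal (∫ x, W t x ∂ν) ∂m :=
        lintegral_congr hin
    _ ≤ ∫⁻ t, ENNReal.ofReal (c t) * ENNReal.ofReal C ∂m :=
        lintegral_mono fun t => mul_le_mul_right (ENNReal.ofReal_le_ofReal (hWle t)) _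
    _ = (∫⁻ t, ENNReal.ofReal (c t) ∂m) * ENNReal.ofReal C :=
        lintegral_mul_const _ hcm.ennreal_ofReal
    _ = ENNReal.ofReal (∫ t, c t ∂m) * ENNReal.ofReal C := by
        rw [ofReal_integral_eq_lintegral_ofReal hcint (Eventually.of_forall hc0)]
    _ < ⊤ := ENNReal.mul_lt_top ENNReal.ofReal_lt_top ENNReal.ofReal_lt_top


end ProdInt

/-- Hellinger bound for mixtures: `h²(P,Q) ≤ 2h²(p,q) + 2∫ h²(P_t,Q_t) q(t) dm(t)`. -/
theorem hellinger_mixture {T E : Type*} [MeasurableSpace T] [MeasurableSpace E]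
    (m : Measure T) (ν : Measure E) [SigmaFinite m] [SigmaFinite ν]
    (p q : T → ℝ) (P Q : T → E → ℝ)
    (hp0 : ∀ t, 0 ≤ p t) (hq0 : ∀ t, 0 ≤ q t)
    (hpm : Measurable p) (hqm : Measurable q)
    (hp1 : ∫ t, p t ∂m = 1) (hq1 : ∫ t, q t ∂m = 1)
    (hP0 : ∀ t x, 0 ≤ P t x) (hQ0 : ∀ t x, 0 ≤ Q t x)
    (hPm : Measurable (Function.uncurry P)) (hQm : Measurable (Function.uncurry Q))
    (hP1 : ∀ t, ∫ x, P t x ∂ν = 1) (hQ1 : ∀ t, ∫ x, Q t x ∂ν = 1) :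
    hell2 ν (fun x => ∫ t, P t x * p t ∂m) (fun x => ∫ t, Q t x * q t ∂m) ≤
      2 * hell2 m p q + 2 * ∫ t, hell2 ν (P t) (Q t) * q t ∂m := by
  -- basic integrabilities
  have hpint : Integrable p m := integrable_of_integral_eq_one' hp1
  have hqint : Integrable q m := integrable_of_integral_eq_one' hq1
  have hPint : ∀ t, Integrable (P t) ν := fun t => integrable_of_integral_eq_one' (hP1 t)
  have hQint : ∀ t, Integrable (Q t) ν := fun t => integrable_of_integral_eq_one' (hQ1 t)
  -- the three mixtures
  set F : E → ℝ := fun x => ∫ t, P t x * p t ∂m with hFdef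
  set R : E → ℝ := fun x => ∫ t, P t x * q t ∂m with hRdef
  set G : E → ℝ := fun x => ∫ t, Q t x * q t ∂m with hGdef
  -- the Hellinger integrand family and the p-q Hellinger integrand
  set W : T → E → ℝ := fun t x => (Real.sqrt (P t x) - Real.sqrt (Q t x)) ^ 2 with hWdef
  set c : T → ℝ := fun t => (Real.sqrt (p t) - Real.sqrt (q t)) ^ 2 with hcdef
  have hW0 : ∀ t x, 0 ≤ W t x := fun t x => sq_nonneg _
  have hc0 : ∀ t, 0 ≤ c t := fun t => sq_nonneg _
  have hWm : Measurable (Function.uncurry W) := (hPm.sqrt.sub hQm.sqrt).pow_const 2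
  have hcm : Measurable c := (hpm.sqrt.sub hqm.sqrt).pow_const 2
  have hWint : ∀ t, Integrable (W t) ν := by
    intro t
    refine Integrable.mono' (((hPint t).add (hQint t)).const_mul 2)
      (hWm.of_uncurry_left).aestronglyMeasurable ?_
    refine Eventually.of_forall fun x => ?_
    rw [Real.norm_of_nonneg (hW0 t x)]
    have h1 := Real.sq_sqrt (hP0 t x)
    have h2 := Real.sq_sqrt (hQ0 t x)
    have h3 := Real.sqrt_nonneg (P t x)
    have h4 := Real.sqrt_nonneg (Q t x)
    simp only [W, Pi.add_apply]
    nlinarith [sq_nonneg (Real.sqrt (P t x) + Real.sqrt (Q t x))]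
  have hcint : Integrable c m := by
    refine Integrable.mono' ((hpint.add hqint).const_mul 2) hcm.aestronglyMeasurable ?_
    refine Eventually.of_forall fun t => ?_
    rw [Real.norm_of_nonneg (hc0 t)]
    have h1 := Real.sq_sqrt (hp0 t)
    have h2 := Real.sq_sqrt (hq0 t)
    simp only [c, Pi.add_apply]
    nlinarith [sq_nonneg (Real.sqrt (p t) + Real.sqrt (q t))]
  -- ∫ W t = 2 * hell2 ν (P t) (Q t)
  have hWval : ∀ t, ∫ x, W t x ∂ν = 2 * hell2 ν (P t) (Q t) := by
    intro t; rw [hell2]; ring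
  have hWle : ∀ t, ∫ x, W t x ∂ν ≤ 4 := by
    intro t
    calc ∫ x, W t x ∂ν ≤ ∫ x, 2 * (P t x + Q t x) ∂ν := by
          refine integral_mono (hWint t) (((hPint t).add (hQint t)).const_mul 2) fun x => ?_
          have h1 := Real.sq_sqrt (hP0 t x)
          have h2 := Real.sq_sqrt (hQ0 t x)
          have h3 := Real.sqrt_nonneg (P t x)
          have h4 := Real.sqrt_nonneg (Q t x)
          simp only [W]
          nlinarith [sq_nonneg (Real.sqrt (P t x) + Real.sqrt (Q t x))]
      _ = 4 := by
          rw [integral_const_mul, integral_add (hPint t) (hQint t), hP1 t, hQ1 t]; norm_num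
  -- product integrabilities
  have IPp : Integrable (Function.uncurry fun t x => P t x * p t) (m.prod ν) :=
    mix_prod_integrable hPm hP0 hPint (fun t => (hP1 t).le) hp0 hpm hpint
  have IPq : Integrable (Function.uncurry fun t x => P t x * q t) (m.prod ν) :=
    mix_prod_integrable hPm hP0 hPint (fun t => (hP1 t).le) hq0 hqm hqint
  have IQq : Integrable (Function.uncurry fun t x => Q t x * q t) (m.prod ν) :=
    mix_prod_integrable hQm hQ0 hQint (fun t => (hQ1 t).le) hq0 hqm hqint
  have IPc : Integrable (Function.uncurry fun t x => P t x * c t) (m.prod ν) :=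
    mix_prod_integrable hPm hP0 hPint (fun t => (hP1 t).le) hc0 hcm hcint
  have IWq : Integrable (Function.uncurry fun t x => W t x * q t) (m.prod ν) :=
    mix_prod_integrable hWm hW0 hWint hWle hq0 hqm hqint
  -- integrability of the mixtures
  have hFi : Integrable F ν := IPp.swap.integral_prod_left
  have hRi : Integrable R ν := IPq.swap.integral_prod_left
  have hGi : Integrable G ν := IQq.swap.integral_prod_left
  set B : E → ℝ := fun x => ∫ t, P t x * c t ∂m with hBdef
  set B2 : E → ℝ := fun x => ∫ t, W t x * q t ∂m with hB2def
  have hBi : Integrable B ν := IPc.swap.integral_prod_left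
  have hB2i : Integrable B2 ν := IWq.swap.integral_prod_left
  -- a.e. slice integrabilities
  have haePp : ∀ᵐ x ∂ν, Integrable (fun t => P t x * p t) m := IPp.swap.prod_right_ae
  have haePq : ∀ᵐ x ∂ν, Integrable (fun t => P t x * q t) m := IPq.swap.prod_right_ae
  have haeQq : ∀ᵐ x ∂ν, Integrable (fun t => Q t x * q t) m := IQq.swap.prod_right_ae
  -- nonnegativity of mixtures
  have hF0 : ∀ x, 0 ≤ F x := fun x => integral_nonneg fun t => mul_nonneg (hP0 t x) (hp0 t)
  have hR0 : ∀ x, 0 ≤ R x := fun x => integral_nonneg fun t => mul_nonneg (hP0 t x) (hq0 t)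
  have hG0 : ∀ x, 0 ≤ G x := fun x => integral_nonneg fun t => mul_nonneg (hQ0 t x) (hq0 t)
  -- integrability of the two intermediate Hellinger integrands
  have hFRint : Integrable (fun x => (Real.sqrt (F x) - Real.sqrt (R x)) ^ 2) ν := by
    refine Integrable.mono' ((hFi.add hRi).const_mul 2)
      (((Real.continuous_sqrt.comp_aestronglyMeasurable hFi.1).sub
        (Real.continuous_sqrt.comp_aestronglyMeasurable hRi.1)).pow 2) ?_
    refine Eventually.of_forall fun x => ?_
    rw [Real.norm_of_nonneg (sq_nonneg _)]
    simp only [Pi.add_apply]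
    nlinarith [Real.sq_sqrt (hF0 x), Real.sq_sqrt (hR0 x), Real.sqrt_nonneg (F x),
      Real.sqrt_nonneg (R x), sq_nonneg (Real.sqrt (F x) + Real.sqrt (R x))]
  have hRGint : Integrable (fun x => (Real.sqrt (R x) - Real.sqrt (G x)) ^ 2) ν := by
    refine Integrable.mono' ((hRi.add hGi).const_mul 2)
      (((Real.continuous_sqrt.comp_aestronglyMeasurable hRi.1).sub
        (Real.continuous_sqrt.comp_aestronglyMeasurable hGi.1)).pow 2) ?_
    refine Eventually.of_forall fun x => ?_
    rw [Real.norm_of_nonneg (sq_nonneg _)]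
    simp only [Pi.add_apply]
    nlinarith [Real.sq_sqrt (hR0 x), Real.sq_sqrt (hG0 x), Real.sqrt_nonneg (R x),
      Real.sqrt_nonneg (G x), sq_nonneg (Real.sqrt (R x) + Real.sqrt (G x))]
  -- Step 1: triangle-type splitting
  have hsplit : hell2 ν F G ≤ (∫ x, (Real.sqrt (F x) - Real.sqrt (R x)) ^ 2 ∂ν)
      + ∫ x, (Real.sqrt (R x) - Real.sqrt (G x)) ^ 2 ∂ν := by
    rw [hell2]
    have hmono : ∫ x, (Real.sqrt (F x) - Real.sqrt (G x)) ^ 2 ∂ν ≤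
        ∫ x, 2 * (Real.sqrt (F x) - Real.sqrt (R x)) ^ 2
          + 2 * (Real.sqrt (R x) - Real.sqrt (G x)) ^ 2 ∂ν := by
      refine integral_mono_of_nonneg (Eventually.of_forall fun x => sq_nonneg _)
        ((hFRint.const_mul 2).add (hRGint.const_mul 2))
        (Eventually.of_forall fun x => ?_)
      beta_reduce
      nlinarith [sq_nonneg (Real.sqrt (F x) - 2 * Real.sqrt (R x) + Real.sqrt (G x))]
    rw [integral_add (hFRint.const_mul 2) (hRGint.const_mul 2),
      integral_const_mul, integral_const_mul] at hmono
    linarith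
  -- Step 2: first term
  have hS1 : ∫ x, (Real.sqrt (F x) - Real.sqrt (R x)) ^ 2 ∂ν ≤ ∫ x, B x ∂ν := by
    refine integral_mono_of_nonneg (Eventually.of_forall fun x => sq_nonneg _) hBi ?_
    filter_upwards [haePp, haePq] with x h1 h2
    have key := sq_sqrt_sub_integral_le h1 h2
      (Eventually.of_forall fun t => mul_nonneg (hP0 t x) (hp0 t))
      (Eventually.of_forall fun t => mul_nonneg (hP0 t x) (hq0 t))
    refine key.trans (le_of_eq (integral_congr_ae (Eventually.of_forall fun t => ?_)))
    show (Real.sqrt (P t x * p t) - Real.sqrt (P t x * q t)) ^ 2 = P t x * c t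
    simp only [c]
    rw [Real.sqrt_mul (hP0 t x), Real.sqrt_mul (hP0 t x), ← mul_sub, mul_pow,
      Real.sq_sqrt (hP0 t x)]
  have hBval : ∫ x, B x ∂ν = 2 * hell2 m p q := by
    have hswap := integral_integral_swap (f := fun t x => P t x * c t) IPc
    have hin : ∀ t, ∫ x, P t x * c t ∂ν = c t := fun t => by
      rw [integral_mul_const, hP1 t, one_mul]
    rw [funext hin] at hswap
    rw [hBdef, ← hswap, hell2]
    ring
  -- Step 3: second term
  have hS2 : ∫ x, (Real.sqrt (R x) - Real.sqrt (G x)) ^ 2 ∂ν ≤ ∫ x, B2 x ∂ν := by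
    refine integral_mono_of_nonneg (Eventually.of_forall fun x => sq_nonneg _) hB2i ?_
    filter_upwards [haePq, haeQq] with x h1 h2
    have key := sq_sqrt_sub_integral_le h1 h2
      (Eventually.of_forall fun t => mul_nonneg (hP0 t x) (hq0 t))
      (Eventually.of_forall fun t => mul_nonneg (hQ0 t x) (hq0 t))
    refine key.trans (le_of_eq (integral_congr_ae (Eventually.of_forall fun t => ?_)))
    show (Real.sqrt (P t x * q t) - Real.sqrt (Q t x * q t)) ^ 2 = W t x * q t
    simp only [W]
    rw [Real.sqrt_mul (hP0 t x), Real.sqrt_mul (hQ0 t x), ← sub_mul, mul_pow,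
      Real.sq_sqrt (hq0 t)]
  have hB2val : ∫ x, B2 x ∂ν = 2 * ∫ t, hell2 ν (P t) (Q t) * q t ∂m := by
    have hswap := integral_integral_swap (f := fun t x => W t x * q t) IWq
    have hin : ∀ t, ∫ x, W t x * q t ∂ν = 2 * (hell2 ν (P t) (Q t) * q t) := fun t => by
      rw [integral_mul_const, hWval t]; ring
    rw [funext hin] at hswap
    rw [hB2def, ← hswap, integral_const_mul]
  linarith [hsplit, hS1, hS2, hBval, hB2val]
end

section
/- Let $(P_t)_{t\in T}$ and $(Q_t)_{t\in T}$ be measurable families of probability densities on a $\sigma$-finite measured space $(E,\mathcal{A},\nu)$, and let $q$ be a probability density on a $\sigma$-finite space $(T,\mathcal{T},m)$. Then $h^2\big(\int_T P_t q(t)\,dm(t),\ \int_T Q_t q(t)\,dm(t)\big) \le 2\int_T h^2(P_t,Q_t)\,q(t)\,dm(t)$. -/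
open MeasureTheory

lemma cs_sqrt {α : Type*} [MeasurableSpace α] {μ : Measure α} {f g : α → ℝ}
    (hf0 : ∀ t, 0 ≤ f t) (hg0 : ∀ t, 0 ≤ g t)
    (hfm : Measurable f) (hgm : Measurable g)
    (hf : Integrable f μ) (hg : Integrable g μ) :
    ∫ t, Real.sqrt (f t) * Real.sqrt (g t) ∂μ ≤
      Real.sqrt (∫ t, f t ∂μ) * Real.sqrt (∫ t, g t ∂μ) := by
  have hpq : Real.HolderConjugate 2 2 := Real.holderConjugate_iff.mpr ⟨one_lt_two, by norm_num⟩
  have hsf : MemLp (fun t => Real.sqrt (f t)) (ENNReal.ofReal 2) μ := by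
    rw [show ENNReal.ofReal 2 = 2 by norm_num]
    rw [memLp_two_iff_integrable_sq (hfm.sqrt.aestronglyMeasurable)]
    exact hf.congr (Filter.Eventually.of_forall fun t => (Real.sq_sqrt (hf0 t)).symm)
  have hsg : MemLp (fun t => Real.sqrt (g t)) (ENNReal.ofReal 2) μ := by
    rw [show ENNReal.ofReal 2 = 2 by norm_num]
    rw [memLp_two_iff_integrable_sq (hgm.sqrt.aestronglyMeasurable)]
    exact hg.congr (Filter.Eventually.of_forall fun t => (Real.sq_sqrt (hg0 t)).symm)
  have := integral_mul_le_Lp_mul_Lq_of_nonneg hpq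
    (Filter.Eventually.of_forall fun t => Real.sqrt_nonneg (f t))
    (Filter.Eventually.of_forall fun t => Real.sqrt_nonneg (g t)) hsf hsg
  calc ∫ t, Real.sqrt (f t) * Real.sqrt (g t) ∂μ
      ≤ (∫ t, Real.sqrt (f t) ^ (2:ℝ) ∂μ) ^ (1/(2:ℝ))
        * (∫ t, Real.sqrt (g t) ^ (2:ℝ) ∂μ) ^ (1/(2:ℝ)) := this
    _ = Real.sqrt (∫ t, f t ∂μ) * Real.sqrt (∫ t, g t ∂μ) := by
        rw [Real.sqrt_eq_rpow, Real.sqrt_eq_rpow]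
        congr 2 <;> refine integral_congr_ae (Filter.Eventually.of_forall fun t => ?_)
        · show Real.sqrt (f t) ^ (2:ℝ) = f t
          rw [Real.rpow_two, Real.sq_sqrt (hf0 t)]
        · show Real.sqrt (g t) ^ (2:ℝ) = g t
          rw [Real.rpow_two, Real.sq_sqrt (hg0 t)]

/-- the product of square roots is integrable -/
lemma sqrt_mul_sqrt_integrable_s4 {α : Type*} [MeasurableSpace α] {μ : Measure α} {f g : α → ℝ}
    (hf0 : ∀ t, 0 ≤ f t) (hg0 : ∀ t, 0 ≤ g t)
    (hfm : Measurable f) (hgm : Measurable g)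
    (hf : Integrable f μ) (hg : Integrable g μ) :
    Integrable (fun t => Real.sqrt (f t) * Real.sqrt (g t)) μ := by
  refine Integrable.mono (hf.add hg) (hfm.sqrt.mul hgm.sqrt).aestronglyMeasurable
    (Filter.Eventually.of_forall fun t => ?_)
  have h1 : (0:ℝ) ≤ Real.sqrt (f t) * Real.sqrt (g t) :=
    mul_nonneg (Real.sqrt_nonneg _) (Real.sqrt_nonneg _)
  simp only [Pi.add_apply]
  rw [Real.norm_of_nonneg h1, Real.norm_of_nonneg (add_nonneg (hf0 t) (hg0 t))]
  nlinarith [Real.sq_sqrt (hf0 t), Real.sq_sqrt (hg0 t), sq_nonneg (Real.sqrt (f t) - Real.sqrt (g t))]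

/-- expansion of the integral of the squared difference of square roots -/
lemma sq_sqrt_sub_key {α : Type*} [MeasurableSpace α] {μ : Measure α} {f g : α → ℝ}
    (hf0 : ∀ t, 0 ≤ f t) (hg0 : ∀ t, 0 ≤ g t)
    (hfm : Measurable f) (hgm : Measurable g)
    (hf : Integrable f μ) (hg : Integrable g μ) :
    Integrable (fun t => (Real.sqrt (f t) - Real.sqrt (g t)) ^ 2) μ ∧
    ∫ t, (Real.sqrt (f t) - Real.sqrt (g t)) ^ 2 ∂μ
      = (∫ t, f t ∂μ) + (∫ t, g t ∂μ) - 2 * ∫ t, Real.sqrt (f t) * Real.sqrt (g t) ∂μ := by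
  have hfg := sqrt_mul_sqrt_integrable_s4 hf0 hg0 hfm hgm hf hg
  have hfun : (fun t => (Real.sqrt (f t) - Real.sqrt (g t)) ^ 2)
      = fun t => (f t + g t) - 2 * (Real.sqrt (f t) * Real.sqrt (g t)) := by
    funext t
    rw [sub_sq, Real.sq_sqrt (hf0 t), Real.sq_sqrt (hg0 t)]
    ring
  constructor
  · rw [hfun]; exact (hf.add hg).sub (hfg.const_mul 2)
  · have hsum : Integrable (fun t => f t + g t) μ := hf.add hg
    rw [hfun, integral_sub hsum (hfg.const_mul 2), integral_add hf hg, integral_const_mul]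

/-- Changing only the component densities:
`h²(∫ P_t q(t) dm, ∫ Q_t q(t) dm) ≤ 2 ∫ h²(P_t,Q_t) q(t) dm`. -/
theorem hellinger_mixture_components {T E : Type*} [MeasurableSpace T] [MeasurableSpace E]
    (m : Measure T) (ν : Measure E) [SigmaFinite m] [SigmaFinite ν]
    (q : T → ℝ) (P Q : T → E → ℝ)
    (hq0 : ∀ t, 0 ≤ q t) (hqm : Measurable q) (hq1 : ∫ t, q t ∂m = 1)
    (hP0 : ∀ t x, 0 ≤ P t x) (hQ0 : ∀ t x, 0 ≤ Q t x)
    (hPm : Measurable (Function.uncurry P)) (hQm : Measurable (Function.uncurry Q))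
    (hP1 : ∀ t, ∫ x, P t x ∂ν = 1) (hQ1 : ∀ t, ∫ x, Q t x ∂ν = 1) :
    hell2 ν (fun x => ∫ t, P t x * q t ∂m) (fun x => ∫ t, Q t x * q t ∂m) ≤
      2 * ∫ t, hell2 ν (P t) (Q t) * q t ∂m := by
  classical
  -- section measurabilities
  have hPt : ∀ t, Measurable (P t) := fun t => hPm.comp measurable_prodMk_left
  have hQt : ∀ t, Measurable (Q t) := fun t => hQm.comp measurable_prodMk_left
  have hPx : ∀ x, Measurable fun t => P t x :=
    fun x => hPm.comp (measurable_id.prodMk measurable_const)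
  have hQx : ∀ x, Measurable fun t => Q t x :=
    fun x => hQm.comp (measurable_id.prodMk measurable_const)
  -- integrabilities coming from unit integrals
  have hq_int : Integrable q m := by
    by_contra h; rw [integral_undef h] at hq1; norm_num at hq1
  have hP_int : ∀ t, Integrable (P t) ν := by
    intro t; by_contra h
    have := hP1 t; rw [integral_undef h] at this; norm_num at this
  have hQ_int : ∀ t, Integrable (Q t) ν := by
    intro t; by_contra h
    have := hQ1 t; rw [integral_undef h] at this; norm_num at this
  -- lintegral versions
  have hlq : ∫⁻ t, ENNReal.ofReal (q t) ∂m = 1 := by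
    rw [← ofReal_integral_eq_lintegral_ofReal hq_int (Filter.Eventually.of_forall hq0), hq1,
      ENNReal.ofReal_one]
  have hlP : ∀ t, ∫⁻ x, ENNReal.ofReal (P t x) ∂ν = 1 := fun t => by
    rw [← ofReal_integral_eq_lintegral_ofReal (hP_int t)
      (Filter.Eventually.of_forall (hP0 t)), hP1 t, ENNReal.ofReal_one]
  have hlQ : ∀ t, ∫⁻ x, ENNReal.ofReal (Q t x) ∂ν = 1 := fun t => by
    rw [← ofReal_integral_eq_lintegral_ofReal (hQ_int t)
      (Filter.Eventually.of_forall (hQ0 t)), hQ1 t, ENNReal.ofReal_one]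
  -- the ENNReal-valued mixtures
  set α : E → ENNReal := fun x => ∫⁻ t, ENNReal.ofReal (P t x * q t) ∂m with hαdef
  set β : E → ENNReal := fun x => ∫⁻ t, ENNReal.ofReal (Q t x * q t) ∂m with hβdef
  have hPq_prod : Measurable fun z : E × T => ENNReal.ofReal (P z.2 z.1 * q z.2) :=
    ((hPm.comp measurable_swap).mul (hqm.comp measurable_snd)).ennreal_ofReal
  have hQq_prod : Measurable fun z : E × T => ENNReal.ofReal (Q z.2 z.1 * q z.2) :=
    ((hQm.comp measurable_swap).mul (hqm.comp measurable_snd)).ennreal_ofReal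
  have hαm : Measurable α := hPq_prod.lintegral_prod_right'
  have hβm : Measurable β := hQq_prod.lintegral_prod_right'
  have hPinner : ∀ t, ∫⁻ x, ENNReal.ofReal (P t x * q t) ∂ν = ENNReal.ofReal (q t) := by
    intro t
    calc ∫⁻ x, ENNReal.ofReal (P t x * q t) ∂ν
        = ∫⁻ x, ENNReal.ofReal (P t x) * ENNReal.ofReal (q t) ∂ν := by
          simp_rw [ENNReal.ofReal_mul (hP0 t _)]
      _ = (∫⁻ x, ENNReal.ofReal (P t x) ∂ν) * ENNReal.ofReal (q t) :=
          lintegral_mul_const _ (hPt t).ennreal_ofReal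
      _ = ENNReal.ofReal (q t) := by rw [hlP t, one_mul]
  have hQinner : ∀ t, ∫⁻ x, ENNReal.ofReal (Q t x * q t) ∂ν = ENNReal.ofReal (q t) := by
    intro t
    calc ∫⁻ x, ENNReal.ofReal (Q t x * q t) ∂ν
        = ∫⁻ x, ENNReal.ofReal (Q t x) * ENNReal.ofReal (q t) ∂ν := by
          simp_rw [ENNReal.ofReal_mul (hQ0 t _)]
      _ = (∫⁻ x, ENNReal.ofReal (Q t x) ∂ν) * ENNReal.ofReal (q t) :=
          lintegral_mul_const _ (hQt t).ennreal_ofReal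
      _ = ENNReal.ofReal (q t) := by rw [hlQ t, one_mul]
  have hαint : ∫⁻ x, α x ∂ν = 1 := by
    rw [hαdef]
    rw [lintegral_lintegral_swap hPq_prod.aemeasurable]
    simp_rw [hPinner]
    exact hlq
  have hβint : ∫⁻ x, β x ∂ν = 1 := by
    rw [hβdef]
    rw [lintegral_lintegral_swap hQq_prod.aemeasurable]
    simp_rw [hQinner]
    exact hlq
  -- pointwise key inequality
  have key : ∀ᵐ x ∂ν,
      ENNReal.ofReal ((Real.sqrt (∫ t, P t x * q t ∂m) - Real.sqrt (∫ t, Q t x * q t ∂m)) ^ 2)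
        ≤ ∫⁻ t, ENNReal.ofReal ((Real.sqrt (P t x) - Real.sqrt (Q t x)) ^ 2 * q t) ∂m := by
    filter_upwards [ae_lt_top hαm (by rw [hαint]; exact ENNReal.one_ne_top),
      ae_lt_top hβm (by rw [hβint]; exact ENNReal.one_ne_top)] with x hαx hβx
    have hf0 : ∀ t, 0 ≤ P t x * q t := fun t => mul_nonneg (hP0 t x) (hq0 t)
    have hg0 : ∀ t, 0 ≤ Q t x * q t := fun t => mul_nonneg (hQ0 t x) (hq0 t)
    have hfm : Measurable fun t => P t x * q t := (hPx x).mul hqm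
    have hgm : Measurable fun t => Q t x * q t := (hQx x).mul hqm
    have hf_int : Integrable (fun t => P t x * q t) m := by
      refine ⟨hfm.aestronglyMeasurable, ?_⟩
      rw [hasFiniteIntegral_iff_ofReal (Filter.Eventually.of_forall hf0)]
      exact hαx
    have hg_int : Integrable (fun t => Q t x * q t) m := by
      refine ⟨hgm.aestronglyMeasurable, ?_⟩
      rw [hasFiniteIntegral_iff_ofReal (Filter.Eventually.of_forall hg0)]
      exact hβx
    obtain ⟨hsq_int, hexp⟩ := sq_sqrt_sub_key hf0 hg0 hfm hgm hf_int hg_int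
    have hcs := cs_sqrt hf0 hg0 hfm hgm hf_int hg_int
    have hA0 : 0 ≤ ∫ t, P t x * q t ∂m := integral_nonneg hf0
    have hB0 : 0 ≤ ∫ t, Q t x * q t ∂m := integral_nonneg hg0
    have hreal : (Real.sqrt (∫ t, P t x * q t ∂m) - Real.sqrt (∫ t, Q t x * q t ∂m)) ^ 2
        ≤ ∫ t, (Real.sqrt (P t x * q t) - Real.sqrt (Q t x * q t)) ^ 2 ∂m := by
      rw [hexp, sub_sq, Real.sq_sqrt hA0, Real.sq_sqrt hB0]
      nlinarith [hcs]
    calc ENNReal.ofReal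
          ((Real.sqrt (∫ t, P t x * q t ∂m) - Real.sqrt (∫ t, Q t x * q t ∂m)) ^ 2)
        ≤ ENNReal.ofReal (∫ t, (Real.sqrt (P t x * q t) - Real.sqrt (Q t x * q t)) ^ 2 ∂m) :=
          ENNReal.ofReal_le_ofReal hreal
      _ = ∫⁻ t, ENNReal.ofReal ((Real.sqrt (P t x * q t) - Real.sqrt (Q t x * q t)) ^ 2) ∂m :=
          ofReal_integral_eq_lintegral_ofReal hsq_int
            (Filter.Eventually.of_forall fun t => sq_nonneg _)
      _ = ∫⁻ t, ENNReal.ofReal ((Real.sqrt (P t x) - Real.sqrt (Q t x)) ^ 2 * q t) ∂m := by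
          refine lintegral_congr fun t => ?_
          congr 1
          rw [Real.sqrt_mul (hP0 t x), Real.sqrt_mul (hQ0 t x), ← sub_mul, mul_pow,
            Real.sq_sqrt (hq0 t)]
  -- per-component integral computation
  have hh0 : ∀ t, 0 ≤ hell2 ν (P t) (Q t) := fun t =>
    mul_nonneg (by norm_num) (integral_nonneg fun x => sq_nonneg _)
  have hsqt : ∀ t, Integrable (fun x => (Real.sqrt (P t x) - Real.sqrt (Q t x)) ^ 2) ν :=
    fun t => (sq_sqrt_sub_key (hP0 t) (hQ0 t) (hPt t) (hQt t) (hP_int t) (hQ_int t)).1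
  have hh1 : ∀ t, hell2 ν (P t) (Q t) ≤ 1 := by
    intro t
    obtain ⟨hint, hexp⟩ := sq_sqrt_sub_key (hP0 t) (hQ0 t) (hPt t) (hQt t) (hP_int t) (hQ_int t)
    have hnn : 0 ≤ ∫ x, Real.sqrt (P t x) * Real.sqrt (Q t x) ∂ν :=
      integral_nonneg fun x => mul_nonneg (Real.sqrt_nonneg _) (Real.sqrt_nonneg _)
    simp only [hell2]
    rw [hexp, hP1 t, hQ1 t]
    linarith
  have ht : ∀ t, (∫⁻ x, ENNReal.ofReal ((Real.sqrt (P t x) - Real.sqrt (Q t x)) ^ 2 * q t) ∂ν)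
      = ENNReal.ofReal (2 * hell2 ν (P t) (Q t) * q t) := by
    intro t
    calc ∫⁻ x, ENNReal.ofReal ((Real.sqrt (P t x) - Real.sqrt (Q t x)) ^ 2 * q t) ∂ν
        = ∫⁻ x, ENNReal.ofReal ((Real.sqrt (P t x) - Real.sqrt (Q t x)) ^ 2)
            * ENNReal.ofReal (q t) ∂ν := by
          simp_rw [ENNReal.ofReal_mul (sq_nonneg _)]
      _ = (∫⁻ x, ENNReal.ofReal ((Real.sqrt (P t x) - Real.sqrt (Q t x)) ^ 2) ∂ν)
            * ENNReal.ofReal (q t) :=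
          lintegral_mul_const _ (((hPt t).sqrt.sub (hQt t).sqrt).pow_const 2).ennreal_ofReal
      _ = ENNReal.ofReal (∫ x, (Real.sqrt (P t x) - Real.sqrt (Q t x)) ^ 2 ∂ν)
            * ENNReal.ofReal (q t) := by
          rw [ofReal_integral_eq_lintegral_ofReal (hsqt t)
            (Filter.Eventually.of_forall fun x => sq_nonneg _)]
      _ = ENNReal.ofReal (2 * hell2 ν (P t) (Q t) * q t) := by
          rw [← ENNReal.ofReal_mul (integral_nonneg fun x => sq_nonneg _)]
          congr 1
          simp only [hell2]
          ring
  -- measurability of t ↦ hell2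
  have hhm : Measurable fun t => hell2 ν (P t) (Q t) := by
    have h1 : StronglyMeasurable fun z : T × E =>
        (Real.sqrt (Function.uncurry P z) - Real.sqrt (Function.uncurry Q z)) ^ 2 :=
      ((hPm.sqrt.sub hQm.sqrt).pow_const 2).stronglyMeasurable
    have h2 := h1.integral_prod_right' (ν := ν)
    exact (measurable_const.mul h2.measurable : Measurable fun t =>
      (1/2 : ℝ) * ∫ x, (Real.sqrt (P t x) - Real.sqrt (Q t x)) ^ 2 ∂ν)
  have hhq_int : Integrable (fun t => 2 * hell2 ν (P t) (Q t) * q t) m := by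
    refine Integrable.mono (hq_int.const_mul 2)
      ((measurable_const.mul hhm).mul hqm).aestronglyMeasurable
      (Filter.Eventually.of_forall fun t => ?_)
    have h1 : 0 ≤ 2 * hell2 ν (P t) (Q t) * q t :=
      mul_nonneg (mul_nonneg (by norm_num) (hh0 t)) (hq0 t)
    rw [Real.norm_of_nonneg h1, Real.norm_of_nonneg (by nlinarith [hq0 t] : (0:ℝ) ≤ 2 * q t)]
    nlinarith [hh1 t, hq0 t]
  -- the big lintegral chain
  have hprodm : Measurable fun z : E × T =>
      ENNReal.ofReal ((Real.sqrt (P z.2 z.1) - Real.sqrt (Q z.2 z.1)) ^ 2 * q z.2) := by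
    exact ((((hPm.comp measurable_swap).sqrt.sub
      (hQm.comp measurable_swap).sqrt).pow_const 2).mul (hqm.comp measurable_snd)).ennreal_ofReal
  have hBig : ∫⁻ x, ENNReal.ofReal
        ((Real.sqrt (∫ t, P t x * q t ∂m) - Real.sqrt (∫ t, Q t x * q t ∂m)) ^ 2) ∂ν
      ≤ ENNReal.ofReal (∫ t, 2 * hell2 ν (P t) (Q t) * q t ∂m) := by
    calc ∫⁻ x, ENNReal.ofReal
          ((Real.sqrt (∫ t, P t x * q t ∂m) - Real.sqrt (∫ t, Q t x * q t ∂m)) ^ 2) ∂ν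
        ≤ ∫⁻ x, ∫⁻ t, ENNReal.ofReal ((Real.sqrt (P t x) - Real.sqrt (Q t x)) ^ 2 * q t) ∂m ∂ν :=
          lintegral_mono_ae key
      _ = ∫⁻ t, ∫⁻ x, ENNReal.ofReal ((Real.sqrt (P t x) - Real.sqrt (Q t x)) ^ 2 * q t) ∂ν ∂m :=
          lintegral_lintegral_swap hprodm.aemeasurable
      _ = ∫⁻ t, ENNReal.ofReal (2 * hell2 ν (P t) (Q t) * q t) ∂m := by simp_rw [ht]
      _ = ENNReal.ofReal (∫ t, 2 * hell2 ν (P t) (Q t) * q t ∂m) :=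
          (ofReal_integral_eq_lintegral_ofReal hhq_int (Filter.Eventually.of_forall fun t =>
            mul_nonneg (mul_nonneg (by norm_num) (hh0 t)) (hq0 t))).symm
  -- measurability of the mixtures
  have hAm : Measurable fun x => ∫ t, P t x * q t ∂m := by
    have hstr : StronglyMeasurable fun z : E × T => P z.2 z.1 * q z.2 :=
      ((hPm.comp measurable_swap).mul (hqm.comp measurable_snd)).stronglyMeasurable
    exact hstr.integral_prod_right'.measurable
  have hBm : Measurable fun x => ∫ t, Q t x * q t ∂m := by
    have hstr : StronglyMeasurable fun z : E × T => Q z.2 z.1 * q z.2 :=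
      ((hQm.comp measurable_swap).mul (hqm.comp measurable_snd)).stronglyMeasurable
    exact hstr.integral_prod_right'.measurable
  -- conclude
  have hLHS : hell2 ν (fun x => ∫ t, P t x * q t ∂m) (fun x => ∫ t, Q t x * q t ∂m)
      = (1/2 : ℝ) * (∫⁻ x, ENNReal.ofReal
        ((Real.sqrt (∫ t, P t x * q t ∂m) - Real.sqrt (∫ t, Q t x * q t ∂m)) ^ 2) ∂ν).toReal := by
    simp only [hell2]
    congr 1
    rw [integral_eq_lintegral_of_nonneg_ae (Filter.Eventually.of_forall fun x => sq_nonneg _)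
      ((hAm.sqrt.sub hBm.sqrt).pow_const 2).aestronglyMeasurable
      (f := fun x => (Real.sqrt (∫ t, P t x * q t ∂m) - Real.sqrt (∫ t, Q t x * q t ∂m)) ^ 2)]
  rw [hLHS]
  have hmono := ENNReal.toReal_mono ENNReal.ofReal_ne_top hBig
  rw [ENNReal.toReal_ofReal (integral_nonneg fun t =>
    mul_nonneg (mul_nonneg (by norm_num) (hh0 t)) (hq0 t))] at hmono
  have h2int : ∫ t, 2 * hell2 ν (P t) (Q t) * q t ∂m
      = 2 * ∫ t, hell2 ν (P t) (Q t) * q t ∂m := by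
    simp_rw [mul_assoc]
    exact integral_const_mul 2 _
  rw [h2int] at hmono
  have hnn : (0:ℝ) ≤ (∫⁻ x, ENNReal.ofReal
      ((Real.sqrt (∫ t, P t x * q t ∂m) - Real.sqrt (∫ t, Q t x * q t ∂m)) ^ 2) ∂ν).toReal :=
    ENNReal.toReal_nonneg
  linarith
end

section
/- Let $J$ be a finite nonempty index set and let $(\phi_j)_{j\in J}$ and $(\psi_j)_{j\in J}$ be two orthonormal families in a complex Hilbert space $\mathbb{H}$. Set $A=(\langle\phi_i,\psi_j\rangle)_{i,j\in J}$. If $a=\sum_{j\in J}\|\phi_j-\psi_j\|^2 \le 2/5$, then $1-|\det A| \le \frac{5}{2}\sum_{j\in J}\|\phi_j-\psi_j\|^2$. -/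
open scoped InnerProductSpace
open Finset Matrix

private lemma weierstrass' {ι : Type*} [DecidableEq ι] (s : Finset ι) (μ : ι → ℝ)
    (h0 : ∀ i ∈ s, 0 ≤ μ i) (h1 : ∀ i ∈ s, μ i ≤ 1) :
    1 - ∑ i ∈ s, μ i ≤ ∏ i ∈ s, (1 - μ i) := by
  induction s using Finset.induction with
  | empty => simp
  | @insert b t hb ih =>
    rw [Finset.sum_insert hb, Finset.prod_insert hb]
    have h0' : ∀ i ∈ t, 0 ≤ μ i := fun i hi => h0 i (Finset.mem_insert_of_mem hi)
    have h1' : ∀ i ∈ t, μ i ≤ 1 := fun i hi => h1 i (Finset.mem_insert_of_mem hi)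
    have ht := ih h0' h1'
    have hs : 0 ≤ ∑ i ∈ t, μ i := Finset.sum_nonneg h0'
    have hb0 := h0 b (Finset.mem_insert_self b t)
    have hb1 := h1 b (Finset.mem_insert_self b t)
    nlinarith

/-- If `(φ_j)` and `(ψ_j)` are orthonormal families indexed by a finite nonempty set `J`
in a complex Hilbert space, `A = (⟪φ_i, ψ_j⟫)` and `∑_j ‖φ_j - ψ_j‖² ≤ 2/5`, then
`1 - |det A| ≤ (5/2) ∑_j ‖φ_j - ψ_j‖²`. -/
theorem one_sub_det_gram_le {H ι : Type*} [NormedAddCommGroup H] [InnerProductSpace ℂ H]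
    [Fintype ι] [Nonempty ι] [DecidableEq ι]
    (φ ψ : ι → H) (hφ : Orthonormal ℂ φ) (hψ : Orthonormal ℂ ψ)
    (ha : ∑ j, ‖φ j - ψ j‖ ^ 2 ≤ 2 / 5) :
    1 - ‖Matrix.det (Matrix.of fun i j : ι => (inner ℂ (φ i) (ψ j) : ℂ))‖ ≤
      (5 / 2) * ∑ j, ‖φ j - ψ j‖ ^ 2 := by
  classical
  set A : Matrix ι ι ℂ := Matrix.of fun i j : ι => (inner ℂ (φ i) (ψ j) : ℂ) with hAdef
  set a : ℝ := ∑ j, ‖φ j - ψ j‖ ^ 2 with hadef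
  have ha0 : 0 ≤ a := Finset.sum_nonneg fun j _ => sq_nonneg _
  set u : ι → H := fun i => φ i - ∑ j, (⟪ψ j, φ i⟫_ℂ) • ψ j with hu
  set C : Matrix ι ι ℂ := 1 - A * Aᴴ with hC
  -- entrywise formula for C
  have hCent : ∀ i k, C i k = (if i = k then 1 else 0) - ∑ j, ⟪φ i, ψ j⟫_ℂ * ⟪ψ j, φ k⟫_ℂ := by
    intro i k
    rw [hC, Matrix.sub_apply, Matrix.one_apply, Matrix.mul_apply]
    congr 1
    apply Finset.sum_congr rfl
    intro j _
    rw [hAdef, Matrix.conjTranspose_apply, Matrix.of_apply, Matrix.of_apply,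
      ← inner_conj_symm (φ k), RCLike.star_def, Complex.conj_conj]
  -- C is the Gram matrix of u
  have hGram : ∀ i k, C i k = ⟪u i, u k⟫_ℂ := by
    intro i k
    rw [hCent i k, hu]
    rw [inner_sub_left, inner_sub_right, inner_sub_right]
    rw [orthonormal_iff_ite.mp hφ]
    rw [inner_sum]
    simp only [inner_smul_right]
    rw [sum_inner]
    simp only [inner_smul_left, inner_conj_symm]
    rw [sum_inner]
    simp only [inner_smul_left, inner_conj_symm, inner_sum, inner_smul_right,
      orthonormal_iff_ite.mp hψ, mul_ite, mul_one, mul_zero, Finset.sum_ite_eq,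
      Finset.mem_univ, if_true]
    ring
  -- quadratic form of C is a norm squared
  have hquad : ∀ x : ι → ℂ, dotProduct (star x) (C *ᵥ x) = ((‖∑ i, x i • u i‖ ^ 2 : ℝ) : ℂ) := by
    intro x
    have : dotProduct (star x) (C *ᵥ x) = ⟪∑ i, x i • u i, ∑ k, x k • u k⟫_ℂ := by
      rw [sum_inner]
      simp only [inner_smul_left, inner_sum, inner_smul_right, ← hGram]
      rw [dotProduct, Finset.sum_congr rfl]
      intro i _
      rw [Matrix.mulVec, dotProduct]
      rw [Pi.star_apply, Finset.mul_sum]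
      apply Finset.sum_congr rfl
      intro k _
      simp only [Complex.star_def]
      ring
    rw [this, inner_self_eq_norm_sq_to_K]
    norm_cast
  -- Hermitian M
  have hM : (A * Aᴴ).IsHermitian := Matrix.isHermitian_mul_conjTranspose_self A
  set ν : ι → ℝ := hM.eigenvalues with hν
  have hν0 : ∀ i, 0 ≤ ν i := fun i => Matrix.eigenvalues_self_mul_conjTranspose_nonneg A i
  -- eigenvalues at most 1
  have hν1 : ∀ i, ν i ≤ 1 := by
    intro i
    set v : ι → ℂ := ⇑(hM.eigenvectorBasis i) with hv
    have hvi : ν i = Complex.re (dotProduct (star v) ((A * Aᴴ) *ᵥ v)) := hM.eigenvalues_eq i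
    have hvnorm : dotProduct (star v) v = 1 := by
      have h1 : ‖hM.eigenvectorBasis i‖ = 1 := hM.eigenvectorBasis.orthonormal.1 i
      have := inner_self_eq_norm_sq_to_K (𝕜 := ℂ) (hM.eigenvectorBasis i)
      rw [h1] at this
      rw [dotProduct_comm, hv, ← EuclideanSpace.inner_eq_star_dotProduct]
      simpa using this
    have hCv : 0 ≤ Complex.re (dotProduct (star v) (C *ᵥ v)) := by
      rw [hquad v, Complex.ofReal_re]; positivity
    have hsplit : dotProduct (star v) (C *ᵥ v)
        = dotProduct (star v) v - dotProduct (star v) ((A * Aᴴ) *ᵥ v) := by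
      rw [hC, Matrix.sub_mulVec, Matrix.one_mulVec, dotProduct_sub]
    rw [hsplit, hvnorm] at hCv
    simp only [Complex.sub_re, Complex.one_re] at hCv
    linarith [hCv, hvi.ge, hvi.le]
  -- trace identity : ∑ (1 - ν i) = ∑ re (C i i)
  have htraceM : (A * Aᴴ).trace = ∑ i, (ν i : ℂ) := by
    conv_lhs => rw [hM.spectral_theorem]
    rw [Unitary.conjStarAlgAut_apply, Matrix.trace_mul_cycle, Unitary.coe_star_mul_self, one_mul, Matrix.trace_diagonal]
    simp [hν]
  have htrace : ∑ i, (1 - ν i) = ∑ i, Complex.re (C i i) := by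
    have h1 : C.trace = (Fintype.card ι : ℂ) - ∑ i, (ν i : ℂ) := by
      rw [hC, Matrix.trace_sub, Matrix.trace_one, htraceM]
    have h2 : ∑ i, Complex.re (C i i) = Complex.re C.trace := by
      simp [Matrix.trace, Matrix.diag, Complex.re_sum]
    rw [h2, h1]
    push_cast
    simp [Finset.sum_sub_distrib]
  -- diagonal bound
  have hdiag : ∀ i, Complex.re (C i i) ≤ ‖φ i - ψ i‖ ^ 2 := by
    intro i
    have hterm : ∀ j, ⟪φ i, ψ j⟫_ℂ * ⟪ψ j, φ i⟫_ℂ = ((‖⟪ψ j, φ i⟫_ℂ‖ ^ 2 : ℝ) : ℂ) := by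
      intro j
      rw [← inner_conj_symm (φ i) (ψ j), Complex.sq_norm, Complex.normSq_eq_conj_mul_self]
    have hre : Complex.re (C i i) = 1 - ∑ j, ‖⟪ψ j, φ i⟫_ℂ‖ ^ 2 := by
      rw [hCent i i, if_pos rfl]
      simp only [hterm]
      rw [show ((1:ℂ) - ∑ j, ((‖⟪ψ j, φ i⟫_ℂ‖ ^ 2 : ℝ) : ℂ))
          = (((1 - ∑ j, ‖⟪ψ j, φ i⟫_ℂ‖ ^ 2 : ℝ)) : ℂ) by push_cast; ring,
        Complex.ofReal_re]
    rw [hre]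
    have hns : ‖φ i - ψ i‖ ^ 2 = 2 - 2 * Complex.re ⟪φ i, ψ i⟫_ℂ := by
      rw [@norm_sub_sq ℂ]
      simp [hφ.1 i, hψ.1 i]
      ring
    have h1 : ‖⟪ψ i, φ i⟫_ℂ‖ ^ 2 ≤ ∑ j, ‖⟪ψ j, φ i⟫_ℂ‖ ^ 2 :=
      Finset.single_le_sum (f := fun j => ‖⟪ψ j, φ i⟫_ℂ‖ ^ 2)
        (fun j _ => sq_nonneg _) (Finset.mem_univ i)
    have h2 : Complex.re ⟪φ i, ψ i⟫_ℂ ≤ ‖⟪ψ i, φ i⟫_ℂ‖ := by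
      rw [← inner_conj_symm (φ i) (ψ i), Complex.conj_re]
      exact (abs_le.1 (Complex.abs_re_le_norm _)).2
    have h3 : (0:ℝ) ≤ ‖⟪ψ i, φ i⟫_ℂ‖ := norm_nonneg _
    rw [hns]
    nlinarith
  -- determinant
  have hdet : (‖A.det‖) ^ 2 = ∏ i, ν i := by
    have h1 : (A * Aᴴ).det = ((‖A.det‖ ^ 2 : ℝ) : ℂ) := by
      rw [Matrix.det_mul, Matrix.det_conjTranspose, Complex.star_def, Complex.mul_conj,
        Complex.sq_norm]
    have h2 : (A * Aᴴ).det = ∏ i, (ν i : ℂ) := hM.det_eq_prod_eigenvalues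
    rw [h1] at h2
    exact_mod_cast h2
  -- conclusion
  have hprod : 1 - a ≤ ∏ i, ν i := by
    have := weierstrass' Finset.univ (fun i => 1 - ν i)
      (fun i _ => by linarith [hν1 i]) (fun i _ => by linarith [hν0 i])
    simp only [sub_sub_cancel] at this
    have hsum : ∑ i, (1 - ν i) ≤ a := by
      rw [htrace]
      exact Finset.sum_le_sum fun i _ => hdiag i
    linarith
  have hd0 : 0 ≤ ‖A.det‖ := norm_nonneg _
  nlinarith [hprod, hdet, mul_nonneg ha0 hd0]
end

section
/- Let $\phi_1,\ldots,\phi_k$ and $\psi_1,\ldots,\psi_k$ be two orthonormal families in a complex Hilbert space. Writing $A=(\langle\phi_i,\psi_j\rangle)_{i,j=1,\ldots,k}=D+B$ where $D$ is the diagonal matrix with $D_{ii}=\langle\phi_i,\psi_i\rangle$ and $B=A-D$, assume $a=\sum_{j=1}^k\|\phi_j-\psi_j\|^2 \le 2/5$. Then all $|D_{ii}|\ge 1-a/2>0$, and the matrix $M=D^{-1}B$ satisfies $\|M\|_{HS}^2 \le \frac{1-a/4}{(1-a/2)^2}\, a \le \frac{9}{16}$, where $\|\cdot\|_{HS}$ is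 the Hilbert-Schmidt (Frobenius) norm. -/
open Finset

lemma aux_row (r S t a : ℝ) (ht0 : 0 ≤ t) (hta : t ≤ a) (ha : a ≤ 2/5)
    (hr : 1 - t/2 ≤ r) (hS : S ≤ 1) :
    (S - r^2)/r^2 ≤ (1 - a/4)/(1 - a/2)^2 * t := by
  have ht : t ≤ 2/5 := hta.trans ha
  have ha0 : 0 ≤ a := ht0.trans hta
  have hr0 : (0:ℝ) < r := by linarith
  have hq0 : (0:ℝ) < 1 - a/2 := by linarith
  have hp0 : (0:ℝ) < 1 - t/2 := by linarith
  have hrt : (1 - t/2)^2 ≤ r^2 := by nlinarith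
  have hbr : (0:ℝ) ≤ 3/4 - (a+t)/4 + a*t/16 := by nlinarith
  have key : t * ((a - t) * (3/4 - (a+t)/4 + a*t/16)) ≥ 0 :=
    mul_nonneg ht0 (mul_nonneg (by linarith) hbr)
  rw [div_le_iff₀ (by positivity), div_mul_eq_mul_div, div_mul_eq_mul_div,
    le_div_iff₀ (by positivity)]
  calc (S - r^2)*(1-a/2)^2 ≤ (1 - r^2)*(1-a/2)^2 := by nlinarith [sq_nonneg (1-a/2)]
    _ ≤ (1 - (1-t/2)^2)*(1-a/2)^2 := by nlinarith [sq_nonneg (1-a/2)]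
    _ = t*(1-t/4)*(1-a/2)^2 := by ring
    _ ≤ (1-a/4)*t*(1-t/2)^2 := by nlinarith [key]
    _ ≤ (1-a/4)*t*r^2 := by nlinarith [mul_nonneg (by linarith : (0:ℝ) ≤ 1-a/4) ht0]

lemma aux_final (a : ℝ) (ha0 : 0 ≤ a) (ha : a ≤ 2/5) :
    (1 - a/4)/(1 - a/2)^2 * a ≤ 9/16 := by
  have hq0 : (0:ℝ) < 1 - a/2 := by linarith
  rw [div_mul_eq_mul_div, div_le_iff₀ (by positivity)]
  nlinarith [mul_nonneg (by linarith : (0:ℝ) ≤ 2/5 - a) (by linarith : (0:ℝ) ≤ 18/5 - a)]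

/-- Key matrix estimate: with `A = (⟪φ_i,ψ_j⟫)`, `D = diag(⟪φ_i,ψ_i⟫)`, `B = A - D`,
`M = D⁻¹ B` and `a = ∑ ‖φ_j - ψ_j‖² ≤ 2/5`, each `|D_{ii}| ≥ 1 - a/2 > 0` and
`‖M‖²_HS ≤ (1-a/4)/(1-a/2)² · a ≤ 9/16`. -/
theorem gram_offdiagonal_estimate {H : Type*} [NormedAddCommGroup H] [InnerProductSpace ℂ H]
    {k : ℕ} (hk : 0 < k) (φ ψ : Fin k → H) (hφ : Orthonormal ℂ φ) (hψ : Orthonormal ℂ ψ)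
    (a : ℝ) (haeq : a = ∑ j, ‖φ j - ψ j‖ ^ 2) (ha : a ≤ 2 / 5)
    (A D B M : Matrix (Fin k) (Fin k) ℂ)
    (hA : A = Matrix.of fun i j => (inner ℂ (φ i) (ψ j) : ℂ))
    (hD : D = Matrix.diagonal fun i => (inner ℂ (φ i) (ψ i) : ℂ))
    (hB : B = A - D) (hM : M = D⁻¹ * B) :
    (∀ i, 1 - a / 2 ≤ ‖(inner ℂ (φ i) (ψ i) : ℂ)‖) ∧ 0 < 1 - a / 2 ∧
      (∑ i, ∑ j, ‖M i j‖ ^ 2 ≤ (1 - a / 4) / (1 - a / 2) ^ 2 * a) ∧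
      (1 - a / 4) / (1 - a / 2) ^ 2 * a ≤ 9 / 16 := by
  set d : Fin k → ℂ := fun i => (inner ℂ (φ i) (ψ i) : ℂ) with hd
  have ha0 : 0 ≤ a := haeq ▸ Finset.sum_nonneg fun j _ => sq_nonneg _
  have hta : ∀ i, ‖φ i - ψ i‖ ^ 2 ≤ a := fun i => haeq ▸
    Finset.single_le_sum (fun j _ => sq_nonneg (‖φ j - ψ j‖)) (mem_univ i)
  have hre : ∀ i, (d i).re = 1 - ‖φ i - ψ i‖ ^ 2 / 2 := by
    intro i
    have := @norm_sub_sq ℂ _ _ _ _ (φ i) (ψ i)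
    simp only [hφ.1 i, hψ.1 i, RCLike.re_to_complex] at this
    simp only [hd]
    linarith
  have habs' : ∀ i, 1 - ‖φ i - ψ i‖ ^ 2 / 2 ≤ ‖d i‖ := by
    intro i
    calc 1 - ‖φ i - ψ i‖ ^ 2 / 2 = (d i).re := (hre i).symm
      _ ≤ |(d i).re| := le_abs_self _
      _ ≤ ‖d i‖ := Complex.abs_re_le_norm _
  have habs : ∀ i, 1 - a / 2 ≤ ‖d i‖ := fun i =>
    le_trans (by linarith [hta i]) (habs' i)
  have hpos : (0:ℝ) < 1 - a / 2 := by linarith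
  refine ⟨habs, hpos, ?_, aux_final a ha0 ha⟩
  -- entries of M
  have hdne : ∀ i, d i ≠ 0 := by
    intro i h
    have := habs i
    rw [h] at this
    simp at this
    linarith
  have hDinv : D⁻¹ = Matrix.diagonal fun i => (d i)⁻¹ := by
    rw [hD]
    apply Matrix.inv_eq_right_inv
    rw [Matrix.diagonal_mul_diagonal,
      show (fun i => d i * (d i)⁻¹) = fun _ => (1:ℂ) from funext fun i => mul_inv_cancel₀ (hdne i),
      ← Pi.one_def]
    exact Matrix.diagonal_one
  have hMij : ∀ i j, M i j = (d i)⁻¹ * B i j := by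
    intro i j
    rw [hM, hDinv, Matrix.diagonal_mul]
  have hBij : ∀ i j, B i j = if i = j then 0 else (inner ℂ (φ i) (ψ j) : ℂ) := by
    intro i j
    rw [hB, hA, hD]
    by_cases h : i = j <;> simp [Matrix.diagonal_apply, h, hd]
  -- row bound
  have hrow : ∀ i, ∑ j, ‖M i j‖ ^ 2 ≤
      (1 - a / 4) / (1 - a / 2) ^ 2 * ‖φ i - ψ i‖ ^ 2 := by
    intro i
    set r : ℝ := ‖d i‖ with hrdef
    have hr0 : 0 < r := lt_of_lt_of_le hpos (habs i)
    set S : ℝ := ∑ j, ‖(inner ℂ (φ i) (ψ j) : ℂ)‖ ^ 2 with hSdef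
    have hS1 : S ≤ 1 := by
      have := hψ.sum_inner_products_le (φ i) (s := Finset.univ)
      rw [hφ.1 i] at this
      simpa [hSdef, norm_inner_symm] using this
    have hBsum : ∑ j, ‖B i j‖ ^ 2 = S - r ^ 2 := by
      have h1 : S = ‖d i‖ ^ 2
          + ∑ j ∈ Finset.univ.erase i, ‖(inner ℂ (φ i) (ψ j) : ℂ)‖ ^ 2 :=
        (Finset.add_sum_erase _ _ (mem_univ i)).symm
      have h2 : ∑ j, ‖B i j‖ ^ 2
          = ∑ j ∈ Finset.univ.erase i, ‖(inner ℂ (φ i) (ψ j) : ℂ)‖ ^ 2 := by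
        have hB0 : ‖B i i‖ ^ 2 = 0 := by rw [hBij]; simp
        rw [← Finset.add_sum_erase _ (fun j => ‖B i j‖ ^ 2) (mem_univ i),
          hB0, zero_add]
        refine Finset.sum_congr rfl fun j hj => ?_
        rw [hBij, if_neg (Ne.symm (Finset.ne_of_mem_erase hj))]
      rw [h2]; rw [hrdef]; linarith [h1]
    have hMsum : ∑ j, ‖M i j‖ ^ 2 = (S - r ^ 2) / r ^ 2 := by
      rw [eq_div_iff (by positivity), Finset.sum_mul, ← hBsum]
      refine Finset.sum_congr rfl fun j _ => ?_
      rw [hMij, norm_mul, norm_inv, ← hrdef]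
      field_simp
    rw [hMsum]
    exact aux_row r S _ a (sq_nonneg _) (hta i) ha (habs' i) hS1
  calc ∑ i, ∑ j, ‖M i j‖ ^ 2
      ≤ ∑ i, (1 - a / 4) / (1 - a / 2) ^ 2 * ‖φ i - ψ i‖ ^ 2 :=
        Finset.sum_le_sum fun i _ => hrow i
    _ = (1 - a / 4) / (1 - a / 2) ^ 2 * a := by rw [haeq, Finset.mul_sum]
end

section
/- Let $M$ be a $k\times k$ complex matrix with Hilbert-Schmidt norm $\|M\| < 1$ and $\mathrm{Tr}(M)=0$. Then $I+M$ is invertible and $|\det(I+M)| \ge \exp\left(-\frac{\|M\|^2}{2}\left(1+\frac{2\|M\|}{3(1-\|M\|)}\right)\right)$. -/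
set_option maxHeartbeats 1000000

open Matrix Finset

attribute [local instance] Matrix.frobeniusNormedAddCommGroup Matrix.frobeniusNormedRing
  Matrix.frobeniusNormedSpace

namespace DetOneAddLowerAux

variable {k : ℕ}

theorem norm_eq_sqrt (M : Matrix (Fin k) (Fin k) ℂ) :
    ‖M‖ = Real.sqrt (∑ i, ∑ j, ‖M i j‖ ^ 2) := by
  rw [Matrix.frobenius_norm_def, Real.sqrt_eq_rpow]
  congr 1
  simp [Real.rpow_two]

theorem abs_trace_mul_le (A B : Matrix (Fin k) (Fin k) ℂ) :
    ‖(A * B).trace‖ ≤ ‖A‖ * ‖B‖ := by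
  have h1 : (A * B).trace = ∑ p : Fin k × Fin k, A p.1 p.2 * B p.2 p.1 := by
    rw [Fintype.sum_prod_type]
    simp [Matrix.trace, Matrix.diag, Matrix.mul_apply]
  rw [h1]
  refine (norm_sum_le _ _).trans ?_
  have h2 : ∀ p : Fin k × Fin k, ‖A p.1 p.2 * B p.2 p.1‖
      = ‖A p.1 p.2‖ * ‖B p.2 p.1‖ := fun p => norm_mul _ _
  simp_rw [h2]
  have := Real.sum_mul_le_sqrt_mul_sqrt (Finset.univ : Finset (Fin k × Fin k))
    (fun p => ‖A p.1 p.2‖) (fun p => ‖B p.2 p.1‖)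
  refine this.trans_eq ?_
  rw [norm_eq_sqrt, norm_eq_sqrt]
  congr 1
  · rw [Fintype.sum_prod_type]
  · rw [Fintype.sum_prod_type, Finset.sum_comm]

theorem abs_trace_pow_le (M : Matrix (Fin k) (Fin k) ℂ) {p : ℕ} (hp : 2 ≤ p) :
    ‖(M ^ p).trace‖ ≤ ‖M‖ ^ p := by
  have h1 : M ^ p = M ^ (p - 1) * M := by
    rw [← pow_succ]; congr 1; omega
  rw [h1]
  refine (abs_trace_mul_le _ _).trans ?_
  have h2 : ‖M ^ (p - 1)‖ ≤ ‖M‖ ^ (p - 1) := norm_pow_le' M (by omega)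
  calc ‖M ^ (p - 1)‖ * ‖M‖ ≤ ‖M‖ ^ (p - 1) * ‖M‖ :=
        mul_le_mul_of_nonneg_right h2 (norm_nonneg _)
    _ = ‖M‖ ^ p := by rw [← pow_succ]; congr 1; omega

noncomputable def detCLM (k : ℕ) :
    ContinuousMultilinearMap ℂ (fun _ : Fin k => (Fin k → ℂ)) ℂ :=
  MultilinearMap.mkContinuous
    (Matrix.detRowAlternating : (Fin k → ℂ) [⋀^Fin k]→ₗ[ℂ] ℂ).toMultilinearMap
    (Nat.factorial k) (by
      intro m
      show ‖Matrix.det (Matrix.of m)‖ ≤ _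
      rw [Matrix.det_apply]
      refine (norm_sum_le _ _).trans ?_
      have h1 : ∀ σ : Equiv.Perm (Fin k),
          ‖Equiv.Perm.sign σ • ∏ i, Matrix.of m (σ i) i‖ ≤ ∏ i, ‖m i‖ := by
        intro σ
        have hs : ‖Equiv.Perm.sign σ • ∏ i, Matrix.of m (σ i) i‖
            = ‖∏ i, Matrix.of m (σ i) i‖ := by
          rcases Int.units_eq_one_or (Equiv.Perm.sign σ) with h | h <;> simp [h]
        rw [hs, norm_prod]
        have h2 : ∀ i, ‖Matrix.of m (σ i) i‖ ≤ ‖m (σ i)‖ := fun i =>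
          norm_le_pi_norm (m (σ i)) i
        calc ∏ i, ‖Matrix.of m (σ i) i‖ ≤ ∏ i, ‖m (σ i)‖ :=
              Finset.prod_le_prod (fun i _ => norm_nonneg _) (fun i _ => h2 i)
          _ = ∏ i, ‖m i‖ := Equiv.prod_comp σ (fun j => ‖m j‖)
      calc ∑ σ : Equiv.Perm (Fin k), ‖Equiv.Perm.sign σ • ∏ i, Matrix.of m (σ i) i‖
          ≤ ∑ _σ : Equiv.Perm (Fin k), ∏ i, ‖m i‖ :=
            Finset.sum_le_sum fun σ _ => h1 σ
        _ = (Nat.factorial k) * ∏ i, ‖m i‖ := by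
            rw [Finset.sum_const, Finset.card_univ, Fintype.card_perm, nsmul_eq_mul]
            norm_num)

theorem hasDerivAt_det_affine (B C : Matrix (Fin k) (Fin k) ℂ) (t : ℝ) :
    HasDerivAt (fun s : ℝ => (B + s • C).det)
      (∑ i, ((B + t • C).updateRow i (C i)).det) t := by
  classical
  set f := (detCLM k).restrictScalars ℝ with hf
  have hγ : HasDerivAt (fun s : ℝ => (fun i : Fin k => B i + s • C i))
      (fun i : Fin k => C i) t := by
    rw [hasDerivAt_pi]
    intro i
    simpa using ((hasDerivAt_id t).smul_const (C i)).const_add (B i)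
  have hd := (f.hasFDerivAt (x := fun i : Fin k => B i + t • C i)).comp_hasDerivAt t hγ
  rw [ContinuousMultilinearMap.linearDeriv_apply] at hd
  exact hd

theorem sum_det_updateRow (A C : Matrix (Fin k) (Fin k) ℂ) :
    ∑ i, (A.updateRow i (C i)).det = (A.adjugate * C).trace := by
  have h1 : ∀ i, (A.updateRow i (C i)).det = ∑ j, A.adjugate j i * C i j := by
    intro i
    rw [← Matrix.det_transpose, ← Matrix.updateCol_transpose, ← Matrix.cramer_apply,
      Matrix.cramer_eq_adjugate_mulVec]
    rw [Matrix.mulVec]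
    simp only [dotProduct]
    refine Finset.sum_congr rfl fun j _ => ?_
    rw [← Matrix.adjugate_transpose, Matrix.transpose_apply]
  simp_rw [h1]
  rw [Matrix.trace]
  rw [Finset.sum_comm]
  refine Finset.sum_congr rfl fun j _ => ?_
  rw [Matrix.diag, Matrix.mul_apply]

end DetOneAddLowerAux

open DetOneAddLowerAux

/-- If `M` is a `k × k` complex matrix with Hilbert-Schmidt norm `r < 1` and `Tr M = 0`,
then `I + M` is invertible and `|det (I + M)| ≥ exp(-(r²/2)(1 + 2r/(3(1-r))))`. -/
theorem det_one_add_lower_bound {k : ℕ} (M : Matrix (Fin k) (Fin k) ℂ) (r : ℝ)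
    (hr : r = Real.sqrt (∑ i, ∑ j, ‖M i j‖ ^ 2))
    (hr1 : r < 1) (htr : M.trace = 0) :
    IsUnit (1 + M) ∧
      Real.exp (-(r ^ 2 / 2) * (1 + 2 * r / (3 * (1 - r)))) ≤
        ‖Matrix.det (1 + M)‖ := by
  classical
  haveI : CompleteSpace (Matrix (Fin k) (Fin k) ℂ) := FiniteDimensional.complete ℂ _
  have hr0 : 0 ≤ r := hr ▸ Real.sqrt_nonneg _
  have hM : ‖M‖ = r := by rw [norm_eq_sqrt, hr]
  set A : ℝ → Matrix (Fin k) (Fin k) ℂ := fun t => 1 + t • M with hA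
  -- the set where the Neumann series converges
  have hsmall : ∀ t ∈ Set.Icc (0:ℝ) 1, ‖t • M‖ < 1 := by
    intro t ht
    rw [norm_smul, Real.norm_eq_abs, abs_of_nonneg ht.1, hM]
    nlinarith [ht.2]
  have hUnit : ∀ t : ℝ, ‖t • M‖ < 1 → IsUnit (A t) := by
    intro t h
    have h2 := isUnit_one_sub_of_norm_lt_one (x := -(t • M)) (by rwa [norm_neg])
    rwa [sub_neg_eq_add] at h2
  -- the unit at t = 1
  have h1M : A 1 = 1 + M := by rw [hA]; simp
  have hsmall1 : ‖(1:ℝ) • M‖ < 1 := hsmall 1 (by norm_num)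
  have hUnit1 : IsUnit (1 + M) := h1M ▸ hUnit 1 hsmall1
  refine ⟨hUnit1, ?_⟩
  -- the continuous linear map X ↦ trace (X * M)
  set Φ : Matrix (Fin k) (Fin k) ℂ →L[ℂ] ℂ :=
    LinearMap.toContinuousLinearMap
      ((Matrix.traceLinearMap (Fin k) ℂ ℂ).comp (LinearMap.mulRight ℂ M)) with hΦ
  have hΦ_apply : ∀ X : Matrix (Fin k) (Fin k) ℂ, Φ X = (X * M).trace := by
    intro X; simp [hΦ]
  set T : ℝ → ℂ := fun t => Φ (Ring.inverse (A t)) with hT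
  -- the Neumann series for T
  have hTsum : ∀ t : ℝ, ‖t • M‖ < 1 →
      HasSum (fun p : ℕ => ((-t : ℝ) ^ p : ℝ) • (M ^ (p + 1)).trace) (T t) := by
    intro t ht
    have hgs := hasSum_geom_series_inverse (-(t • M)) (by rwa [norm_neg])
    rw [sub_neg_eq_add] at hgs
    have hmap := hgs.mapL Φ
    have heq : ∀ p : ℕ, Φ ((-(t • M)) ^ p) = ((-t : ℝ) ^ p : ℝ) • (M ^ (p + 1)).trace := by
      intro p
      have e1 : (-(t • M)) = (-t : ℝ) • M := by rw [neg_smul]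
      rw [e1, smul_pow]
      rw [← algebraMap_smul ℂ (((-t : ℝ) ^ p : ℝ)) (M ^ p), Φ.map_smul, hΦ_apply,
        ← pow_succ, algebraMap_smul]
    simpa only [heq] using hmap
  -- pointwise bound on T
  have hTbound : ∀ t ∈ Set.Icc (0:ℝ) 1,
      ‖T t‖ ≤ r ^ 2 * t + (r ^ 3 * (1 - r)⁻¹) * t ^ 2 := by
    intro t ht
    obtain ⟨ht0, ht1⟩ := ht
    have htr' : 0 ≤ t * r := mul_nonneg ht0 hr0
    have htr1 : t * r < 1 := by nlinarith
    set a : ℕ → ℂ := fun p => ((-t : ℝ) ^ p : ℝ) • (M ^ (p + 1)).trace with ha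
    have hsum := hTsum t (hsmall t ⟨ht0, ht1⟩)
    have hb : ∀ p : ℕ, ‖a p‖ ≤ r * (t * r) ^ p := by
      intro p
      rw [ha]
      simp only [norm_smul, Real.norm_eq_abs]
      rcases Nat.eq_zero_or_pos p with hp | hp
      · subst hp
        simp only [pow_zero, abs_one, one_mul, pow_one]
        simpa [htr] using hM ▸ hr0
      · have h2 : ‖(M ^ (p + 1)).trace‖ ≤ r ^ (p + 1) := by
          have := abs_trace_pow_le M (p := p + 1) (by omega)
          rwa [hM] at this
        calc |(-t) ^ p| * ‖(M ^ (p + 1)).trace‖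
            ≤ t ^ p * r ^ (p + 1) := by
              rw [abs_pow, abs_neg, abs_of_nonneg ht0]
              exact mul_le_mul_of_nonneg_left h2 (pow_nonneg ht0 _)
          _ = r * (t * r) ^ p := by ring
    have hsummany : Summable fun p => ‖a p‖ := by
      refine Summable.of_nonneg_of_le (fun p => norm_nonneg _) hb ?_
      exact (summable_geometric_of_lt_one htr' htr1).mul_left r
    have habs : ‖T t‖ ≤ ∑' p, ‖a p‖ := by
      rw [← hsum.tsum_eq]
      exact norm_tsum_le_tsum_norm hsummany
    refine habs.trans ?_
    -- split off the first two terms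
    have h0 : ‖a 0‖ = 0 := by
      rw [ha]; simp [htr]
    have h1 : ‖a 1‖ ≤ r ^ 2 * t := by
      refine (hb 1).trans_eq ?_
      ring
    have hsplit : ∑' p, ‖a p‖ = ‖a 0‖ + (‖a 1‖ + ∑' p, ‖a (p + 2)‖) := by
      rw [hsummany.tsum_eq_zero_add]
      congr 1
      rw [((summable_nat_add_iff 1).mpr hsummany).tsum_eq_zero_add]
    have htail : ∑' p, ‖a (p + 2)‖ ≤ (r ^ 3 * (1 - r)⁻¹) * t ^ 2 := by
      have hle : ∀ p : ℕ, ‖a (p + 2)‖ ≤ (r ^ 3 * t ^ 2) * (t * r) ^ p := by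
        intro p
        refine (hb (p + 2)).trans_eq ?_
        ring
      have hs2 : Summable fun p : ℕ => (r ^ 3 * t ^ 2) * (t * r) ^ p :=
        (summable_geometric_of_lt_one htr' htr1).mul_left _
      calc ∑' p, ‖a (p + 2)‖ ≤ ∑' p, (r ^ 3 * t ^ 2) * (t * r) ^ p :=
            Summable.tsum_le_tsum hle ((summable_nat_add_iff 2).mpr hsummany) hs2
        _ = (r ^ 3 * t ^ 2) * (1 - t * r)⁻¹ := by
            rw [tsum_mul_left, tsum_geometric_of_lt_one htr' htr1]
        _ ≤ (r ^ 3 * (1 - r)⁻¹) * t ^ 2 := by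
            have hmono : (1 - t * r)⁻¹ ≤ (1 - r)⁻¹ := by
              apply inv_anti₀ (by linarith)
              nlinarith
            have hnn : 0 ≤ r ^ 3 * t ^ 2 := by positivity
            calc (r ^ 3 * t ^ 2) * (1 - t * r)⁻¹ ≤ (r ^ 3 * t ^ 2) * (1 - r)⁻¹ :=
                  mul_le_mul_of_nonneg_left hmono hnn
              _ = (r ^ 3 * (1 - r)⁻¹) * t ^ 2 := by ring
    rw [hsplit, h0, zero_add]
    linarith
  -- continuity of T where the matrix is a unit
  set V : Set ℝ := {x : ℝ | ‖x • M‖ < 1} with hV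
  have hVopen : IsOpen V := by
    have hc : Continuous fun x : ℝ => ‖x • M‖ :=
      (continuous_id.smul continuous_const).norm
    exact isOpen_lt hc continuous_const
  have hIccV : Set.Icc (0:ℝ) 1 ⊆ V := fun t ht => hsmall t ht
  have hAcont : Continuous A := by
    rw [hA]
    exact continuous_const.add (continuous_id.smul continuous_const)
  have hTcont : ∀ t ∈ V, ContinuousAt T t := by
    intro t ht
    have hu := hUnit t ht
    have h2 : ContinuousAt Ring.inverse (A t) := by
      have := NormedRing.inverse_continuousAt hu.unit
      rwa [hu.unit_spec] at this
    exact Φ.continuous.continuousAt.comp (h2.comp hAcont.continuousAt)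
  have hTcontOn : ContinuousOn T V := fun x hx => (hTcont x hx).continuousWithinAt
  -- the integral function
  set F : ℝ → ℂ := fun u => ∫ s in (0:ℝ)..u, T s with hF
  have hFderiv : ∀ t ∈ Set.Icc (0:ℝ) 1, HasDerivAt F (T t) t := by
    intro t ht
    refine intervalIntegral.integral_hasDerivAt_right ?_ ?_ (hTcont t (hIccV ht))
    · refine ContinuousOn.intervalIntegrable ?_
      refine hTcontOn.mono ?_
      rw [Set.uIcc_of_le ht.1]
      exact (Set.Icc_subset_Icc le_rfl ht.2).trans hIccV
    · exact ContinuousOn.stronglyMeasurableAtFilter hVopen hTcontOn t (hIccV ht)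
  -- derivative of the determinant
  have hdet : ∀ t : ℝ, HasDerivAt (fun u => (A u).det) (((A t).adjugate * M).trace) t := by
    intro t
    have := hasDerivAt_det_affine (1 : Matrix (Fin k) (Fin k) ℂ) M t
    rwa [sum_det_updateRow] at this
  -- the key identity : adjugate-trace = det * T
  have hkey : ∀ t : ℝ, ‖t • M‖ < 1 →
      ((A t).adjugate * M).trace = (A t).det * T t := by
    intro t ht
    have hu := hUnit t ht
    have hud : IsUnit (A t).det := (Matrix.isUnit_iff_isUnit_det _).mp hu
    have hinv : Ring.inverse (A t) = Ring.inverse ((A t).det) • (A t).adjugate := by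
      rw [← Matrix.inv_def, Matrix.nonsing_inv_eq_ringInverse]
    have hTt : T t = Ring.inverse ((A t).det) * ((A t).adjugate * M).trace := by
      show Φ (Ring.inverse (A t)) = _
      rw [hinv, hΦ_apply, Matrix.smul_mul, Matrix.trace_smul, smul_eq_mul]
    rw [hTt, ← mul_assoc, Ring.mul_inverse_cancel _ hud, one_mul]
  -- h is constant on [0,1]
  set h : ℝ → ℂ := fun u => (A u).det * Complex.exp (-F u) with hh
  have hhderiv : ∀ t ∈ Set.Icc (0:ℝ) 1, HasDerivAt h 0 t := by
    intro t ht
    have hd1 := hdet t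
    have hd2 := ((hFderiv t ht).neg).cexp
    have h2 := hd1.mul hd2
    rw [hkey t (hsmall t ht)] at h2
    have heq : (A t).det * T t * Complex.exp (-F t)
        + (A t).det * (Complex.exp (-F t) * -T t) = 0 := by ring
    rw [Pi.neg_apply] at h2
    rw [heq] at h2
    exact h2
  have hconst : ∀ x ∈ Set.Icc (0:ℝ) 1, h x = h 0 := by
    refine constant_of_has_deriv_right_zero ?_ ?_
    · exact fun x hx => ((hhderiv x hx).continuousAt).continuousWithinAt
    · exact fun x hx => ((hhderiv x (Set.Ico_subset_Icc_self hx)).hasDerivWithinAt)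
  have hF0 : F 0 = 0 := intervalIntegral.integral_same
  have hh0 : h 0 = 1 := by
    show (A 0).det * Complex.exp (-F 0) = 1
    rw [hF0]
    simp [hA]
  have hh1 : (1 + M).det * Complex.exp (-F 1) = 1 := by
    have h10 := hconst 1 (by norm_num)
    rw [hh0] at h10
    have e1 : h 1 = (1 + M).det * Complex.exp (-F 1) := by
      show (A 1).det * Complex.exp (-F 1) = _
      rw [h1M]
    rw [← e1, h10]
  have hdet_eq : (1 + M).det = Complex.exp (F 1) := by
    have hne : Complex.exp (-F 1) ≠ 0 := Complex.exp_ne_zero _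
    rw [Complex.exp_neg, ← div_eq_mul_inv, div_eq_one_iff_eq (Complex.exp_ne_zero _)] at hh1
    exact hh1
  -- the final estimate
  rw [hdet_eq, Complex.norm_exp, Real.exp_le_exp]
  have hFre : -‖F 1‖ ≤ (F 1).re := by
    have := Complex.abs_re_le_norm (F 1)
    cases abs_le.mp this with
    | intro h1 h2 => linarith
  have hintn : ‖F 1‖ ≤ ∫ s in (0:ℝ)..1, ‖T s‖ := by
    refine (intervalIntegral.norm_integral_le_integral_norm (by norm_num)).trans_eq ?_
    simp
  have hTi : IntervalIntegrable (fun s => ‖T s‖) MeasureTheory.volume 0 1 := by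
    refine ContinuousOn.intervalIntegrable ?_
    have : ContinuousOn T (Set.uIcc (0:ℝ) 1) := by
      refine hTcontOn.mono ?_
      rw [Set.uIcc_of_le (by norm_num : (0:ℝ) ≤ 1)]
      exact hIccV
    exact this.norm
  have hpoly : IntervalIntegrable (fun s : ℝ => r ^ 2 * s + (r ^ 3 * (1 - r)⁻¹) * s ^ 2)
      MeasureTheory.volume 0 1 := by
    exact ((continuous_const.mul continuous_id).add
      (continuous_const.mul (continuous_pow 2))).intervalIntegrable _ _
  have hmono : ∫ s in (0:ℝ)..1, ‖T s‖
      ≤ ∫ s in (0:ℝ)..1, (r ^ 2 * s + (r ^ 3 * (1 - r)⁻¹) * s ^ 2) := by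
    refine intervalIntegral.integral_mono_on (by norm_num) hTi hpoly ?_
    exact fun s hs => hTbound s hs
  have hcalc : ∫ s in (0:ℝ)..1, (r ^ 2 * s + (r ^ 3 * (1 - r)⁻¹) * s ^ 2)
      = r ^ 2 / 2 + r ^ 3 * (1 - r)⁻¹ / 3 := by
    rw [intervalIntegral.integral_add]
    · rw [intervalIntegral.integral_const_mul, intervalIntegral.integral_const_mul,
        integral_id, integral_pow]
      norm_num
      ring
    · exact (continuous_const.mul continuous_id).intervalIntegrable _ _
    · exact (continuous_const.mul (continuous_pow 2)).intervalIntegrable _ _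
  have hfinal : -(r ^ 2 / 2) * (1 + 2 * r / (3 * (1 - r)))
      = -(r ^ 2 / 2 + r ^ 3 * (1 - r)⁻¹ / 3) := by
    have hne : (1 - r) ≠ 0 := by linarith
    field_simp
  rw [hfinal]
  have : ‖F 1‖ ≤ r ^ 2 / 2 + r ^ 3 * (1 - r)⁻¹ / 3 := by
    calc ‖F 1‖ ≤ _ := hintn
      _ ≤ _ := hmono
      _ = _ := hcalc
  linarith
end

section
/- Let $\lambda,\gamma$ be sequences in $[0,1]$ with $\sum\lambda_j^2<\infty$, $\sum\gamma_j^2<\infty$, and set $\check\lambda_j = 1-\sqrt{1-\lambda_j^2}$, $\check\gamma_j=1-\sqrt{1-\gamma_j^2}$. Then the Hellinger distance between the product-Bernoulli-type distributions $p^\lambda$ and $p^\gamma$ on finite subsets of $\mathbb{N}^*$ satisfies $h^2(p^\lambda,p^\gamma) \le \sum_{j\ge1}|\lambda_j-\gamma_j|^2 + \sum_{j\ge1}|\check\lambda_j-\check\gamma_j|^2$. -/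
open Finset Filter Topology

set_option maxHeartbeats 2000000

private theorem hasProd_iInf' {f : ℕ → ℝ} (h0 : ∀ i, 0 ≤ f i) (h1 : ∀ i, f i ≤ 1) :
    HasProd f (⨅ s : Finset ℕ, ∏ i ∈ s, f i) := by
  have hanti : Antitone (fun s : Finset ℕ => ∏ i ∈ s, f i) := by
    intro s t h
    calc ∏ i ∈ t, f i = (∏ i ∈ t \ s, f i) * ∏ i ∈ s, f i := (Finset.prod_sdiff h).symm
      _ ≤ 1 * ∏ i ∈ s, f i :=
          mul_le_mul_of_nonneg_right
            (Finset.prod_le_one (fun i _ => h0 i) (fun i _ => h1 i))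
            (Finset.prod_nonneg fun i _ => h0 i)
      _ = ∏ i ∈ s, f i := one_mul _
  exact tendsto_atTop_ciInf hanti
    ⟨0, by rintro x ⟨s, rfl⟩; exact Finset.prod_nonneg fun i _ => h0 i⟩

private theorem multipliable01 {f : ℕ → ℝ} (h0 : ∀ i, 0 ≤ f i) (h1 : ∀ i, f i ≤ 1) :
    Multipliable f := ⟨_, hasProd_iInf' h0 h1⟩

private theorem le_tprod01 {f : ℕ → ℝ} (h0 : ∀ i, 0 ≤ f i) (h1 : ∀ i, f i ≤ 1) {K : ℝ}
    (hK : ∀ s : Finset ℕ, K ≤ ∏ i ∈ s, f i) : K ≤ ∏' i, f i := by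
  rw [(hasProd_iInf' h0 h1).tprod_eq]; exact le_ciInf hK

private theorem tprod01_nonneg {f : ℕ → ℝ} (h0 : ∀ i, 0 ≤ f i) (h1 : ∀ i, f i ≤ 1) :
    0 ≤ ∏' i, f i :=
  le_tprod01 h0 h1 fun s => Finset.prod_nonneg fun i _ => h0 i

private theorem tprod01_le_one {f : ℕ → ℝ} (h0 : ∀ i, 0 ≤ f i) (h1 : ∀ i, f i ≤ 1) :
    ∏' i, f i ≤ 1 := by
  rw [(hasProd_iInf' h0 h1).tprod_eq]
  exact ciInf_le_of_le ⟨0, by rintro x ⟨s, rfl⟩; exact Finset.prod_nonneg fun i _ => h0 i⟩ ∅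
    (by simp)

private theorem one_sub_sum_le_prod' {u : ℕ → ℝ} (h0 : ∀ j, 0 ≤ u j) (h1 : ∀ j, u j ≤ 1)
    (s : Finset ℕ) : 1 - ∑ j ∈ s, u j ≤ ∏ j ∈ s, (1 - u j) := by
  induction s using Finset.cons_induction with
  | empty => simp
  | cons i s hi ih =>
    rw [Finset.prod_cons, Finset.sum_cons]
    have hP : 0 ≤ ∏ j ∈ s, (1 - u j) := Finset.prod_nonneg fun j _ => by linarith [h1 j]
    have hS : 0 ≤ ∑ j ∈ s, u j := Finset.sum_nonneg fun j _ => h0 j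
    nlinarith [mul_nonneg (by linarith [h1 i] : (0:ℝ) ≤ 1 - u i) (sub_nonneg.2 ih),
      mul_nonneg (h0 i) hS]

private theorem sqrt_prod' {f : ℕ → ℝ} (h0 : ∀ j, 0 ≤ f j) (s : Finset ℕ) :
    Real.sqrt (∏ j ∈ s, f j) = ∏ j ∈ s, Real.sqrt (f j) := by
  induction s using Finset.cons_induction with
  | empty => simp
  | cons i s hi ih => rw [Finset.prod_cons, Finset.prod_cons, Real.sqrt_mul (h0 i), ih]

private theorem sum_powerset_prod_ite' (F G : ℕ → ℝ) (s : Finset ℕ) :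
    ∑ t ∈ s.powerset, ∏ j ∈ s, (if j ∈ t then F j else G j) = ∏ j ∈ s, (F j + G j) := by
  rw [Finset.prod_add]
  refine Finset.sum_congr rfl fun t ht => ?_
  rw [Finset.mem_powerset] at ht
  rw [Finset.prod_ite, Finset.filter_mem_eq_inter, Finset.inter_eq_right.2 ht,
    ← Finset.sdiff_eq_filter]

/-- The probability of the finite subset `J` under the determinantal mixing distribution
with parameter sequence `lam`. -/
noncomputable def pdet (lam : ℕ → ℝ) (J : Finset ℕ) : ℝ :=
  ∏' j, if j ∈ J then lam j ^ 2 else 1 - lam j ^ 2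

/-- The squared Hellinger distance between the mixing distributions `p^λ` and `p^γ` is at most
`∑_j |λ_j - γ_j|² + ∑_j |λ̌_j - γ̌_j|²` where `λ̌_j = 1 - √(1-λ_j²)`. -/
theorem hellinger_mixing_le (lam gam : ℕ → ℝ)
    (hlam : ∀ j, lam j ∈ Set.Icc (0 : ℝ) 1) (hgam : ∀ j, gam j ∈ Set.Icc (0 : ℝ) 1)
    (hlsum : Summable fun j => lam j ^ 2) (hgsum : Summable fun j => gam j ^ 2) :
    (1 / 2) * ∑' J : Finset ℕ, (Real.sqrt (pdet lam J) - Real.sqrt (pdet gam J)) ^ 2 ≤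
      ∑' j, |lam j - gam j| ^ 2 +
        ∑' j, |(1 - Real.sqrt (1 - lam j ^ 2)) - (1 - Real.sqrt (1 - gam j ^ 2))| ^ 2 := by
  have hl0 : ∀ j, 0 ≤ lam j := fun j => (hlam j).1
  have hl1 : ∀ j, lam j ≤ 1 := fun j => (hlam j).2
  have hg0 : ∀ j, 0 ≤ gam j := fun j => (hgam j).1
  have hg1 : ∀ j, gam j ≤ 1 := fun j => (hgam j).2
  have ha0 : ∀ j, 0 ≤ lam j ^ 2 := fun j => sq_nonneg _
  have ha1 : ∀ j, lam j ^ 2 ≤ 1 := fun j => pow_le_one₀ (hl0 j) (hl1 j)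
  have hb0 : ∀ j, 0 ≤ gam j ^ 2 := fun j => sq_nonneg _
  have hb1 : ∀ j, gam j ^ 2 ≤ 1 := fun j => pow_le_one₀ (hg0 j) (hg1 j)
  -- generic facts about the ite-functions
  have hite0 : ∀ (c : ℕ → ℝ), (∀ j, 0 ≤ c j) → (∀ j, c j ≤ 1) → ∀ (J : Finset ℕ) (j : ℕ),
      0 ≤ (if j ∈ J then c j else 1 - c j) := by
    intro c h0 h1 J j; split_ifs; exacts [h0 j, by linarith [h1 j]]
  have hite1 : ∀ (c : ℕ → ℝ), (∀ j, 0 ≤ c j) → (∀ j, c j ≤ 1) → ∀ (J : Finset ℕ) (j : ℕ),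
      (if j ∈ J then c j else 1 - c j) ≤ 1 := by
    intro c h0 h1 J j; split_ifs; exacts [h1 j, by linarith [h0 j]]
  -- decomposition of pdet-type products
  have hdecomp : ∀ (c : ℕ → ℝ), (∀ j, 0 ≤ c j) → (∀ j, c j ≤ 1) →
      ∀ (n : ℕ) (J : Finset ℕ), J ⊆ Finset.range n →
      (∏' j, if j ∈ J then c j else 1 - c j) =
        (∏ j ∈ Finset.range n, if j ∈ J then c j else 1 - c j) * ∏' j, (1 - c (j + n)) := by
    intro c h0 h1 n J hJ
    have hm : Multipliable (fun j => if (j + n) ∈ J then c (j + n) else 1 - c (j + n)) :=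
      multipliable01 (fun j => hite0 c h0 h1 J (j + n)) (fun j => hite1 c h0 h1 J (j + n))
    rw [← Multipliable.prod_mul_tprod_nat_mul' (f := fun j => if j ∈ J then c j else 1 - c j) (k := n) hm]
    congr 1
    refine tprod_congr fun j => if_neg fun h => ?_
    have := Finset.mem_range.1 (hJ h); omega
  -- covering a finite family of finsets by a range
  have cover : ∀ S : Finset (Finset ℕ), ∃ n, ∀ J ∈ S, J ⊆ Finset.range n := by
    intro S
    refine ⟨(S.sup fun J => J.sup id) + 1, fun J hJ x hx => Finset.mem_range.2 ?_⟩
    have h1 : id x ≤ J.sup id := Finset.le_sup hx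
    have h2 : J.sup id ≤ S.sup fun J => J.sup id := Finset.le_sup (f := fun J => J.sup id) hJ
    simp only [id] at h1
    omega
  -- partial sums of pdet-type are bounded by 1
  have hbound : ∀ (c : ℕ → ℝ), (∀ j, 0 ≤ c j) → (∀ j, c j ≤ 1) →
      ∀ S : Finset (Finset ℕ), ∑ J ∈ S, (∏' j, if j ∈ J then c j else 1 - c j) ≤ 1 := by
    intro c h0 h1 S
    obtain ⟨n, hn⟩ := cover S
    have ht0 : 0 ≤ ∏' j, (1 - c (j + n)) :=
      tprod01_nonneg (fun j => by linarith [h1 (j + n)]) (fun j => by linarith [h0 (j + n)])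
    have ht1 : (∏' j, (1 - c (j + n))) ≤ 1 :=
      tprod01_le_one (fun j => by linarith [h1 (j + n)]) (fun j => by linarith [h0 (j + n)])
    calc ∑ J ∈ S, (∏' j, if j ∈ J then c j else 1 - c j)
        = ∑ J ∈ S, (∏ j ∈ Finset.range n, if j ∈ J then c j else 1 - c j) *
            ∏' j, (1 - c (j + n)) :=
          Finset.sum_congr rfl fun J hJ => hdecomp c h0 h1 n J (hn J hJ)
      _ = (∑ J ∈ S, ∏ j ∈ Finset.range n, if j ∈ J then c j else 1 - c j) *
            ∏' j, (1 - c (j + n)) := (Finset.sum_mul _ _ _).symm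
      _ ≤ (∑ J ∈ (Finset.range n).powerset,
            ∏ j ∈ Finset.range n, if j ∈ J then c j else 1 - c j) * ∏' j, (1 - c (j + n)) := by
          refine mul_le_mul_of_nonneg_right ?_ ht0
          refine Finset.sum_le_sum_of_subset_of_nonneg
            (fun J hJ => Finset.mem_powerset.2 (hn J hJ)) fun J _ _ =>
            Finset.prod_nonneg fun j _ => hite0 c h0 h1 J j
      _ = (∏ j ∈ Finset.range n, (c j + (1 - c j))) * ∏' j, (1 - c (j + n)) := by
          rw [sum_powerset_prod_ite']
      _ ≤ 1 := by
          have he : ∏ j ∈ Finset.range n, (c j + (1 - c j)) = 1 := by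
            refine Finset.prod_eq_one fun j _ => by ring
          rw [he, one_mul]; exact ht1
  -- nonnegativity & summability of pdet
  have hp0 : ∀ J, 0 ≤ pdet lam J := fun J =>
    tprod01_nonneg (hite0 _ ha0 ha1 J) (hite1 _ ha0 ha1 J)
  have hq0 : ∀ J, 0 ≤ pdet gam J := fun J =>
    tprod01_nonneg (hite0 _ hb0 hb1 J) (hite1 _ hb0 hb1 J)
  have hPsum : Summable (pdet lam) :=
    summable_of_sum_le (fun J => hp0 J) (fun S => hbound _ ha0 ha1 S)
  have hQsum : Summable (pdet gam) :=
    summable_of_sum_le (fun J => hq0 J) (fun S => hbound _ hb0 hb1 S)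
  have hSl : (∑' J, pdet lam J) ≤ 1 := Summable.tsum_le_of_sum_le hPsum (fun S => hbound _ ha0 ha1 S)
  have hSg : (∑' J, pdet gam J) ≤ 1 := Summable.tsum_le_of_sum_le hQsum (fun S => hbound _ hb0 hb1 S)
  -- cross term summability
  have hcr0 : ∀ J, 0 ≤ Real.sqrt (pdet lam J) * Real.sqrt (pdet gam J) := fun J =>
    mul_nonneg (Real.sqrt_nonneg _) (Real.sqrt_nonneg _)
  have hcrle : ∀ J, Real.sqrt (pdet lam J) * Real.sqrt (pdet gam J) ≤
      (pdet lam J + pdet gam J) := by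
    intro J
    nlinarith [Real.sq_sqrt (hp0 J), Real.sq_sqrt (hq0 J),
      sq_nonneg (Real.sqrt (pdet lam J) - Real.sqrt (pdet gam J))]
  have hCsum : Summable (fun J => Real.sqrt (pdet lam J) * Real.sqrt (pdet gam J)) :=
    Summable.of_nonneg_of_le hcr0 hcrle (hPsum.add hQsum)
  -- abbreviations
  set u1 : ℕ → ℝ := fun j => |lam j - gam j| ^ 2 with hu1def
  set u2 : ℕ → ℝ := fun j =>
    |(1 - Real.sqrt (1 - lam j ^ 2)) - (1 - Real.sqrt (1 - gam j ^ 2))| ^ 2 with hu2def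
  set Tl : ℕ → ℝ := fun n => ∏' j, (1 - lam (j + n) ^ 2) with hTldef
  set Tg : ℕ → ℝ := fun n => ∏' j, (1 - gam (j + n) ^ 2) with hTgdef
  -- facts about the square roots
  have hs2 : ∀ j, Real.sqrt (1 - lam j ^ 2) ^ 2 = 1 - lam j ^ 2 := fun j =>
    Real.sq_sqrt (by linarith [ha1 j])
  have ht2 : ∀ j, Real.sqrt (1 - gam j ^ 2) ^ 2 = 1 - gam j ^ 2 := fun j =>
    Real.sq_sqrt (by linarith [hb1 j])
  have hs0 : ∀ j, 0 ≤ Real.sqrt (1 - lam j ^ 2) := fun j => Real.sqrt_nonneg _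
  have ht0 : ∀ j, 0 ≤ Real.sqrt (1 - gam j ^ 2) := fun j => Real.sqrt_nonneg _
  have hs1 : ∀ j, Real.sqrt (1 - lam j ^ 2) ≤ 1 := fun j =>
    Real.sqrt_le_one.2 (by linarith [ha0 j])
  have ht1 : ∀ j, Real.sqrt (1 - gam j ^ 2) ≤ 1 := fun j =>
    Real.sqrt_le_one.2 (by linarith [hb0 j])
  -- pointwise facts about u1, u2
  have hu10 : ∀ j, 0 ≤ u1 j := fun j => sq_nonneg _
  have hu20 : ∀ j, 0 ≤ u2 j := fun j => sq_nonneg _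
  have hu11 : ∀ j, u1 j ≤ 1 := by
    intro j
    have habs : |lam j - gam j| ≤ 1 :=
      abs_le.2 ⟨by linarith [hl0 j, hg1 j], by linarith [hl1 j, hg0 j]⟩
    simpa only [hu1def] using pow_le_one₀ (abs_nonneg _) habs
  have hu21 : ∀ j, u2 j ≤ 1 := by
    intro j
    have habs : |(1 - Real.sqrt (1 - lam j ^ 2)) - (1 - Real.sqrt (1 - gam j ^ 2))| ≤ 1 :=
      abs_le.2 ⟨by linarith [hs1 j, ht0 j], by linarith [hs0 j, ht1 j]⟩
    simpa only [hu2def] using pow_le_one₀ (abs_nonneg _) habs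
  -- the key pointwise algebraic identity
  have hcu : ∀ j, lam j * gam j + Real.sqrt (1 - lam j ^ 2) * Real.sqrt (1 - gam j ^ 2) =
      1 - (u1 j + u2 j) / 2 := by
    intro j
    simp only [hu1def, hu2def, sq_abs]
    linear_combination (1 / 2 : ℝ) * hs2 j + (1 / 2 : ℝ) * ht2 j
  -- summability of u1 and u2
  have hu1sum : Summable u1 := by
    refine Summable.of_nonneg_of_le hu10 (fun j => ?_) ((hlsum.add hgsum).mul_left 2)
    simp only [hu1def, sq_abs]
    nlinarith [sq_nonneg (lam j + gam j)]
  have hu2key : ∀ j, 1 - lam j ^ 2 - gam j ^ 2 ≤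
      Real.sqrt (1 - lam j ^ 2) * Real.sqrt (1 - gam j ^ 2) := by
    intro j
    by_cases hK : 0 ≤ 1 - lam j ^ 2 - gam j ^ 2
    · have hst2 : (Real.sqrt (1 - lam j ^ 2) * Real.sqrt (1 - gam j ^ 2)) ^ 2 =
          (1 - lam j ^ 2) * (1 - gam j ^ 2) := by rw [mul_pow, hs2 j, ht2 j]
      have h1 : (1 - lam j ^ 2 - gam j ^ 2) ^ 2 ≤
          (Real.sqrt (1 - lam j ^ 2) * Real.sqrt (1 - gam j ^ 2)) ^ 2 := by
        nlinarith [mul_nonneg hK (sq_nonneg (lam j)), mul_nonneg hK (sq_nonneg (gam j)),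
          sq_nonneg (lam j * gam j)]
      calc 1 - lam j ^ 2 - gam j ^ 2 = Real.sqrt ((1 - lam j ^ 2 - gam j ^ 2) ^ 2) :=
            (Real.sqrt_sq hK).symm
        _ ≤ Real.sqrt ((Real.sqrt (1 - lam j ^ 2) * Real.sqrt (1 - gam j ^ 2)) ^ 2) :=
            Real.sqrt_le_sqrt h1
        _ = _ := Real.sqrt_sq (mul_nonneg (hs0 j) (ht0 j))
    · push_neg at hK
      nlinarith [mul_nonneg (hs0 j) (ht0 j)]
  have hu2sum : Summable u2 := by
    refine Summable.of_nonneg_of_le hu20 (fun j => ?_) (hlsum.add hgsum)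
    simp only [hu2def, sq_abs]
    nlinarith [hu2key j, hs2 j, ht2 j]
  -- tail products
  have hTl0 : ∀ n, 0 ≤ Tl n := by
    intro n; simp only [hTldef]
    exact tprod01_nonneg (fun j => by linarith [ha1 (j + n)]) (fun j => by linarith [ha0 (j + n)])
  have hTg0 : ∀ n, 0 ≤ Tg n := by
    intro n; simp only [hTgdef]
    exact tprod01_nonneg (fun j => by linarith [hb1 (j + n)]) (fun j => by linarith [hb0 (j + n)])
  have hTl1 : ∀ n, Tl n ≤ 1 := by
    intro n; simp only [hTldef]
    exact tprod01_le_one (fun j => by linarith [ha1 (j + n)]) (fun j => by linarith [ha0 (j + n)])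
  have hTg1 : ∀ n, Tg n ≤ 1 := by
    intro n; simp only [hTgdef]
    exact tprod01_le_one (fun j => by linarith [hb1 (j + n)]) (fun j => by linarith [hb0 (j + n)])
  have hTlow : ∀ n, 1 - (∑' j, lam (j + n) ^ 2) ≤ Tl n := by
    intro n; simp only [hTldef]
    refine le_tprod01 (fun j => by linarith [ha1 (j + n)]) (fun j => by linarith [ha0 (j + n)])
      fun s => ?_
    have h1 : ∑ j ∈ s, lam (j + n) ^ 2 ≤ ∑' j, lam (j + n) ^ 2 :=
      Summable.sum_le_tsum s (fun i _ => sq_nonneg _) ((summable_nat_add_iff n).2 hlsum)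
    have h2 := one_sub_sum_le_prod' (fun j => ha0 (j + n)) (fun j => ha1 (j + n)) s
    linarith
  have hTglow : ∀ n, 1 - (∑' j, gam (j + n) ^ 2) ≤ Tg n := by
    intro n; simp only [hTgdef]
    refine le_tprod01 (fun j => by linarith [hb1 (j + n)]) (fun j => by linarith [hb0 (j + n)])
      fun s => ?_
    have h1 : ∑ j ∈ s, gam (j + n) ^ 2 ≤ ∑' j, gam (j + n) ^ 2 :=
      Summable.sum_le_tsum s (fun i _ => sq_nonneg _) ((summable_nat_add_iff n).2 hgsum)
    have h2 := one_sub_sum_le_prod' (fun j => hb0 (j + n)) (fun j => hb1 (j + n)) s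
    linarith
  have hTltend : Tendsto Tl atTop (𝓝 1) := by
    have h0 : Tendsto (fun n : ℕ => 1 - ∑' j, lam (j + n) ^ 2) atTop (𝓝 1) := by
      have := (tendsto_const_nhds (x := (1 : ℝ)) (f := atTop (α := ℕ))).sub
        (tendsto_sum_nat_add fun j => lam j ^ 2)
      simpa using this
    exact tendsto_of_tendsto_of_tendsto_of_le_of_le h0 tendsto_const_nhds hTlow hTl1
  have hTgtend : Tendsto Tg atTop (𝓝 1) := by
    have h0 : Tendsto (fun n : ℕ => 1 - ∑' j, gam (j + n) ^ 2) atTop (𝓝 1) := by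
      have := (tendsto_const_nhds (x := (1 : ℝ)) (f := atTop (α := ℕ))).sub
        (tendsto_sum_nat_add fun j => gam j ^ 2)
      simpa using this
    exact tendsto_of_tendsto_of_tendsto_of_le_of_le h0 tendsto_const_nhds hTglow hTg1
  -- explicit formulas for pdet on subsets of a range
  have hpdet : ∀ (n : ℕ) (J : Finset ℕ), J ⊆ Finset.range n →
      pdet lam J = (∏ j ∈ Finset.range n, if j ∈ J then lam j ^ 2 else 1 - lam j ^ 2) * Tl n := by
    intro n J hJ
    have := hdecomp (fun j => lam j ^ 2) ha0 ha1 n J hJ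
    simpa only [pdet, hTldef] using this
  have hqdet : ∀ (n : ℕ) (J : Finset ℕ), J ⊆ Finset.range n →
      pdet gam J = (∏ j ∈ Finset.range n, if j ∈ J then gam j ^ 2 else 1 - gam j ^ 2) * Tg n := by
    intro n J hJ
    have := hdecomp (fun j => gam j ^ 2) hb0 hb1 n J hJ
    simpa only [pdet, hTgdef] using this
  -- the cross sum over a powerset factorizes
  have hcross : ∀ n : ℕ,
      ∑ J ∈ (Finset.range n).powerset, Real.sqrt (pdet lam J) * Real.sqrt (pdet gam J) =
        (∏ j ∈ Finset.range n,
          (lam j * gam j + Real.sqrt (1 - lam j ^ 2) * Real.sqrt (1 - gam j ^ 2))) *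
          (Real.sqrt (Tl n) * Real.sqrt (Tg n)) := by
    intro n
    rw [← sum_powerset_prod_ite' (fun j => lam j * gam j)
      (fun j => Real.sqrt (1 - lam j ^ 2) * Real.sqrt (1 - gam j ^ 2)) (Finset.range n),
      Finset.sum_mul]
    refine Finset.sum_congr rfl fun J hJ => ?_
    have hJn := Finset.mem_powerset.1 hJ
    rw [hpdet n J hJn, hqdet n J hJn,
      Real.sqrt_mul (Finset.prod_nonneg fun j _ => hite0 _ ha0 ha1 J j),
      Real.sqrt_mul (Finset.prod_nonneg fun j _ => hite0 _ hb0 hb1 J j),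
      sqrt_prod' (hite0 _ ha0 ha1 J), sqrt_prod' (hite0 _ hb0 hb1 J),
      mul_mul_mul_comm, ← Finset.prod_mul_distrib]
    congr 1
    refine Finset.prod_congr rfl fun j _ => ?_
    by_cases hjJ : j ∈ J
    · simp only [if_pos hjJ, Real.sqrt_sq (hl0 j), Real.sqrt_sq (hg0 j)]
    · simp only [if_neg hjJ]
  -- lower bound for the finite product
  have hprodge : ∀ n : ℕ, 1 - ((∑' j, u1 j) + ∑' j, u2 j) / 2 ≤
      ∏ j ∈ Finset.range n,
        (lam j * gam j + Real.sqrt (1 - lam j ^ 2) * Real.sqrt (1 - gam j ^ 2)) := by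
    intro n
    have h1 : ∑ j ∈ Finset.range n, u1 j ≤ ∑' j, u1 j :=
      Summable.sum_le_tsum _ (fun i _ => hu10 i) hu1sum
    have h2 : ∑ j ∈ Finset.range n, u2 j ≤ ∑' j, u2 j :=
      Summable.sum_le_tsum _ (fun i _ => hu20 i) hu2sum
    have h3 := one_sub_sum_le_prod' (u := fun j => (u1 j + u2 j) / 2)
      (fun j => by linarith [hu10 j, hu20 j]) (fun j => by linarith [hu11 j, hu21 j])
      (Finset.range n)
    have h4 : ∑ j ∈ Finset.range n, (u1 j + u2 j) / 2 =
        ((∑ j ∈ Finset.range n, u1 j) + ∑ j ∈ Finset.range n, u2 j) / 2 := by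
      rw [← Finset.sum_add_distrib, Finset.sum_div]
    have h5 : ∏ j ∈ Finset.range n, (1 - (u1 j + u2 j) / 2) =
        ∏ j ∈ Finset.range n,
          (lam j * gam j + Real.sqrt (1 - lam j ^ 2) * Real.sqrt (1 - gam j ^ 2)) :=
      Finset.prod_congr rfl fun j _ => (hcu j).symm
    rw [← h5]
    refine le_trans ?_ h3
    rw [h4]
    linarith
  -- the cross tsum is bounded below
  have hD : 1 - ((∑' j, u1 j) + ∑' j, u2 j) / 2 ≤
      ∑' J : Finset ℕ, Real.sqrt (pdet lam J) * Real.sqrt (pdet gam J) := by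
    have hDlow : ∀ n : ℕ,
        (1 - ((∑' j, u1 j) + ∑' j, u2 j) / 2) * (Real.sqrt (Tl n) * Real.sqrt (Tg n)) ≤
          ∑' J : Finset ℕ, Real.sqrt (pdet lam J) * Real.sqrt (pdet gam J) := by
      intro n
      have hps : ∑ J ∈ (Finset.range n).powerset,
          Real.sqrt (pdet lam J) * Real.sqrt (pdet gam J) ≤
          ∑' J : Finset ℕ, Real.sqrt (pdet lam J) * Real.sqrt (pdet gam J) :=
        Summable.sum_le_tsum _ (fun J _ => hcr0 J) hCsum
      rw [hcross n] at hps
      exact le_trans (mul_le_mul_of_nonneg_right (hprodge n)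
        (mul_nonneg (Real.sqrt_nonneg _) (Real.sqrt_nonneg _))) hps
    have hlim : Tendsto
        (fun n => (1 - ((∑' j, u1 j) + ∑' j, u2 j) / 2) *
          (Real.sqrt (Tl n) * Real.sqrt (Tg n))) atTop
        (𝓝 ((1 - ((∑' j, u1 j) + ∑' j, u2 j) / 2) * (1 * 1))) := by
      refine Tendsto.const_mul _ (Tendsto.mul ?_ ?_)
      · have := (Real.continuous_sqrt.tendsto 1).comp hTltend
        simpa [Real.sqrt_one, Function.comp_def] using this
      · have := (Real.continuous_sqrt.tendsto 1).comp hTgtend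
        simpa [Real.sqrt_one, Function.comp_def] using this
    have := le_of_tendsto hlim (Filter.Eventually.of_forall hDlow)
    rw [mul_one, mul_one] at this
    exact this
  -- assembling the Hellinger identity
  have hterm : ∀ J : Finset ℕ, (Real.sqrt (pdet lam J) - Real.sqrt (pdet gam J)) ^ 2 =
      pdet lam J + pdet gam J - 2 * (Real.sqrt (pdet lam J) * Real.sqrt (pdet gam J)) := by
    intro J
    linear_combination Real.sq_sqrt (hp0 J) + Real.sq_sqrt (hq0 J)
  have htsum : ∑' J : Finset ℕ, (Real.sqrt (pdet lam J) - Real.sqrt (pdet gam J)) ^ 2 =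
      (∑' J, pdet lam J) + (∑' J, pdet gam J) -
        2 * ∑' J : Finset ℕ, Real.sqrt (pdet lam J) * Real.sqrt (pdet gam J) := by
    rw [tsum_congr hterm, Summable.tsum_sub (hPsum.add hQsum) (hCsum.mul_left 2),
      Summable.tsum_add hPsum hQsum, tsum_mul_left]
  rw [htsum]
  have hU1 : 0 ≤ ∑' j, u1 j := tsum_nonneg hu10
  have hU2 : 0 ≤ ∑' j, u2 j := tsum_nonneg hu20
  linarith [hSl, hSg, hD, hU1, hU2]
end
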